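/- arXiv:2307.09073 — 2 statements merged into one kernel-verified Lean document; each statement's English description precedes it below -/
import Mathlib

section
/- Let (W, S) be a Coxeter system with root system Φ, where roots are half-spaces: subsets of W of the form vα_s with α_s = {w ∈ W : ℓ(sw) > ℓ(w)}. Let {α, β} ⊆ Φ be a prenilpotent pair of distinct roots, i.e. α ∩ β ≠ ∅ and (−α) ∩ (−β) ≠ ∅, where −α denotes the complement W∖α. If the product r_α r_β of the associated reflections has infinite order, then α ⊊ β or β ⊊ α. -/
variable {B W : Type*} [Group W] {M : CoxeterMatrix B}

/-- The simple root (half-space) `α_s = {w ∈ W : ℓ(sw) > ℓ(w)}`. -/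
def simpleRoot (cs : CoxeterSystem M W) (i : B) : Set W :=
  {w | cs.length w < cs.length (cs.simple i * w)}

/-- A root (half-space) is a set of the form `v • α_s`. -/
def IsRoot (cs : CoxeterSystem M W) (α : Set W) : Prop :=
  ∃ (v : W) (i : B), α = (fun w => v * w) '' simpleRoot cs i

namespace CoxPrenil

open List

open CoxeterSystem

variable {B W : Type*} [Group W] {M : CoxeterMatrix B} (cs : CoxeterSystem M W)

open scoped Classical

noncomputable section

local prefix:100 "σ" => cs.simple
local prefix:100 "π" => cs.wordProd
local prefix:100 "ℓ" => cs.length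

/-- helper: conjugation by an involution twice -/
private lemma conj_conj_invol {g t : W} (hg : g * g = 1) : g * (g * t * g) * g = t := by
  have : g * (g * t * g) * g = (g * g) * t * (g * g) := by group
  rw [this, hg, one_mul, mul_one]

/-- The basic permutation of `W × Bool` attached to a simple reflection. -/
def eperm (i : B) : Equiv.Perm (W × Bool) where
  toFun p := (σ i * p.1 * σ i, if p.1 = σ i then !p.2 else p.2)
  invFun p := (σ i * p.1 * σ i, if p.1 = σ i then !p.2 else p.2)
  left_inv p := by
    have hss : σ i * σ i = 1 := cs.simple_mul_simple_self i
    ext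
    · exact conj_conj_invol hss
    · simp only
      by_cases h : p.1 = σ i
      · have h2 : σ i * p.1 * σ i = σ i := by rw [h, hss, one_mul]
        simp [h, h2]
      · have h2 : ¬ (σ i * p.1 * σ i = σ i) := by
          intro hc
          apply h
          have := congrArg (fun x => σ i * x * σ i) hc
          rw [conj_conj_invol hss] at this
          rw [this, hss, one_mul]
        simp [h, h2]
  right_inv p := by
    have hss : σ i * σ i = 1 := cs.simple_mul_simple_self i
    ext
    · exact conj_conj_invol hss
    · simp only
      by_cases h : p.1 = σ i
      · have h2 : σ i * p.1 * σ i = σ i := by rw [h, hss, one_mul]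
        simp [h, h2]
      · have h2 : ¬ (σ i * p.1 * σ i = σ i) := by
          intro hc
          apply h
          have := congrArg (fun x => σ i * x * σ i) hc
          rw [conj_conj_invol hss] at this
          rw [this, hss, one_mul]
        simp [h, h2]

@[simp] lemma eperm_apply (i : B) (p : W × Bool) :
    eperm cs i p = (σ i * p.1 * σ i, if p.1 = σ i then !p.2 else p.2) := rfl

/-- the word `c_j = (vu)^j v` of conjugation conditions, written via `q = uv`. -/
def cword (i i' : B) (j : ℕ) : W := (σ i * σ i')^(-(j:ℤ)) * σ i'

lemma q_inv (i i' : B) : (σ i * σ i')⁻¹ = σ i' * σ i := by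
  rw [mul_inv_rev, cs.inv_simple, cs.inv_simple]

lemma cword_zero (i i' : B) : cword cs i i' 0 = σ i' := by
  unfold cword; norm_num

lemma cword_one (i i' : B) : cword cs i i' 1 = σ i' * σ i * σ i' := by
  unfold cword
  push_cast
  rw [zpow_neg_one, q_inv]

/-- parity of the number of `j < n` with `cword j = t`. -/
def parS (i i' : B) (t : W) : ℕ → Bool
  | 0 => false
  | (n+1) => xor (parS i i' t n) (decide (cword cs i i' n = t))

lemma cword_conj' (i i' : B) (j : ℕ) :
    (σ i * σ i')⁻¹ * cword cs i i' j * (σ i * σ i') = cword cs i i' (j+2) := by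
  unfold cword
  have hvq : σ i' * (σ i * σ i') = (σ i * σ i')⁻¹ * σ i' := by
    rw [q_inv]; group
  push_cast
  rw [mul_assoc, mul_assoc, hvq, show (-((j:ℤ)+2)) = -1 + (-(j:ℤ)) + -1 by ring]
  rw [zpow_add, zpow_add]
  group

lemma cword_conj (i i' : B) (j : ℕ) (t : W) :
    (cword cs i i' j = (σ i * σ i') * t * ((σ i * σ i')⁻¹)) ↔ (cword cs i i' (j+2) = t) := by
  rw [← cword_conj' cs i i' j]
  constructor
  · intro h; rw [h]; group
  · intro h
    have := congrArg (fun x => (σ i * σ i') * x * ((σ i * σ i')⁻¹)) h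
    rw [← this]; group

lemma parS_two (i i' : B) (t : W) :
    parS cs i i' t 2 = xor (decide (cword cs i i' 0 = t)) (decide (cword cs i i' 1 = t)) := by
  show xor (xor (parS cs i i' t 0) _) _ = _
  show xor (xor false _) _ = _
  rw [Bool.false_xor]

lemma parS_shift (i i' : B) (t : W) (n : ℕ) :
    parS cs i i' ((σ i * σ i') * t * ((σ i * σ i')⁻¹)) n
    = xor (parS cs i i' t (n+2))
        (xor (decide (cword cs i i' 0 = t)) (decide (cword cs i i' 1 = t))) := by
  induction n with
  | zero =>
    show false = xor (parS cs i i' t 2) _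
    rw [parS_two]
    simp
  | succ n ih =>
    show xor (parS cs i i' _ n) (decide (cword cs i i' n = _)) = xor (parS cs i i' t (n+3)) _
    rw [ih]
    have : (decide (cword cs i i' n = (σ i * σ i') * t * ((σ i * σ i')⁻¹)))
        = (decide (cword cs i i' (n+2) = t)) := by
      by_cases h : cword cs i i' (n+2) = t
      · rw [decide_eq_true ((cword_conj cs i i' n t).mpr h), decide_eq_true h]
      · have h2 : ¬ (cword cs i i' n = (σ i * σ i') * t * ((σ i * σ i')⁻¹)) := by
          intro hc; exact h ((cword_conj cs i i' n t).mp hc)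
        rw [decide_eq_false h2, decide_eq_false h]
    rw [this]
    show _ = xor (xor (parS cs i i' t (n+2)) (decide (cword cs i i' (n+2) = t))) _
    cases (parS cs i i' t (n+2)) <;> cases (decide (cword cs i i' (n+2) = t)) <;>
      cases (decide (cword cs i i' 0 = t)) <;> cases (decide (cword cs i i' 1 = t)) <;> rfl

lemma cword_period (i i' : B) (h : (σ i' * σ i)^(M i i') = 1) (n : ℕ) :
    cword cs i i' (n + M i i') = cword cs i i' n := by
  unfold cword
  have hq : ((σ i * σ i')⁻¹)^(M i i') = 1 := by rw [q_inv]; exact h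
  have hq2 : (σ i * σ i')^(-(M i i' : ℤ)) = 1 := by
    rw [zpow_neg, ← inv_zpow, zpow_natCast]; exact hq
  push_cast
  rw [neg_add, zpow_add, hq2, mul_one]

lemma parS_add_period (i i' : B) (h : (σ i' * σ i)^(M i i') = 1) (t : W) (n : ℕ) :
    parS cs i i' t (M i i' + n) = xor (parS cs i i' t (M i i')) (parS cs i i' t n) := by
  induction n with
  | zero => simp [parS]
  | succ n ih =>
    show parS cs i i' t ((M i i' + n) + 1) = _
    show xor (parS cs i i' t (M i i' + n)) (decide (cword cs i i' (M i i' + n) = t)) = _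
    rw [ih, Nat.add_comm (M i i') n, cword_period cs i i' h]
    show _ = xor (parS cs i i' t (M i i')) (xor (parS cs i i' t n) (decide (cword cs i i' n = t)))
    cases (parS cs i i' t (M i i')) <;> cases (parS cs i i' t n) <;>
      cases (decide (cword cs i i' n = t)) <;> rfl

lemma parS_braid (i i' : B) (t : W) : parS cs i i' t (2 * (M i i')) = false := by
  have h := cs.simple_mul_simple_pow' i i'
  have h2 := parS_add_period cs i i' h t (M i i')
  rw [two_mul, h2]
  exact Bool.xor_self _

private lemma aux_pow_conj (x t : W) (k : ℕ) :
    x^k * (x * t * x⁻¹) * (x^k)⁻¹ = x^(k+1) * t * (x^(k+1))⁻¹ := by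
  rw [pow_succ']
  group

/-- main computation of powers of `eperm i * eperm i'` -/
lemma eperm_pow (i i' : B) (k : ℕ) (t : W) (ε : Bool) :
    ((eperm cs i * eperm cs i')^k) (t, ε)
      = ((σ i * σ i')^k * t * ((σ i * σ i')^k)⁻¹, xor ε (parS cs i i' t (2*k))) := by
  induction k generalizing t ε with
  | zero => simp [parS]
  | succ k ih =>
    rw [pow_succ, Equiv.Perm.mul_apply]
    have happ : (eperm cs i * eperm cs i') (t, ε)
        = ((σ i * σ i') * t * ((σ i * σ i')⁻¹),
            xor ε (xor (decide (cword cs i i' 0 = t)) (decide (cword cs i i' 1 = t)))) := by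
      rw [Equiv.Perm.mul_apply]
      simp only [eperm_apply]
      have hinv : (σ i * σ i')⁻¹ = σ i' * σ i := by
        rw [mul_inv_rev, cs.inv_simple, cs.inv_simple]
      ext
      · show σ i * (σ i' * t * σ i') * σ i = _
        rw [hinv]; group
      · show (if σ i' * t * σ i' = σ i then !(if t = σ i' then !ε else ε)
              else (if t = σ i' then !ε else ε)) = _
        have hc0 : (t = σ i') ↔ (cword cs i i' 0 = t) := by
          rw [cword_zero]; exact eq_comm
        have hc1 : (σ i' * t * σ i' = σ i) ↔ (cword cs i i' 1 = t) := by
          rw [cword_one]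
          have hv := cs.simple_mul_simple_self i'
          constructor
          · intro h
            have h3 := conj_conj_invol (g := σ i') (t := t) hv
            rw [h] at h3
            exact h3
          · intro h
            rw [← h]
            exact conj_conj_invol (g := σ i') (t := σ i) hv
        by_cases h0 : t = σ i' <;> by_cases h1 : σ i' * t * σ i' = σ i
        · rw [if_pos h1, if_pos h0]
          simp [(hc0.mp h0), (hc1.mp h1)]
        · rw [if_neg h1, if_pos h0]
          have : ¬ (cword cs i i' 1 = t) := fun hh => h1 (hc1.mpr hh)
          simp [(hc0.mp h0), this]
        · rw [if_pos h1, if_neg h0]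
          have : ¬ (cword cs i i' 0 = t) := fun hh => h0 (hc0.mpr hh)
          simp [this, (hc1.mp h1)]
        · rw [if_neg h1, if_neg h0]
          have hh0 : ¬ (cword cs i i' 0 = t) := fun hh => h0 (hc0.mpr hh)
          have hh1 : ¬ (cword cs i i' 1 = t) := fun hh => h1 (hc1.mpr hh)
          simp [hh0, hh1]
    rw [happ, ih]
    ext
    · exact aux_pow_conj (σ i * σ i') t k
    · show xor (xor ε _) (parS cs i i' ((σ i * σ i') * t * ((σ i * σ i')⁻¹)) (2*k)) = _
      rw [parS_shift]
      have : 2*k+2 = 2*(k+1) := by ring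
      rw [this]
      cases ε <;> cases (parS cs i i' t (2*(k+1))) <;>
        cases (decide (cword cs i i' 0 = t)) <;> cases (decide (cword cs i i' 1 = t)) <;> rfl

lemma eperm_liftable : M.IsLiftable (fun i => eperm cs i) := by
  intro i i'
  ext p
  · show ((((eperm cs i * eperm cs i')^(M i i')) p).1 : W) = p.1
    rw [show p = (p.1, p.2) from rfl, eperm_pow]
    show (σ i * σ i')^(M i i') * p.1 * ((σ i * σ i')^(M i i'))⁻¹ = p.1
    rw [cs.simple_mul_simple_pow i i']
    group
  · show ((((eperm cs i * eperm cs i')^(M i i')) p).2 : Bool) = p.2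
    rw [show p = (p.1, p.2) from rfl, eperm_pow]
    show xor p.2 (parS cs i i' p.1 (2 * (M i i'))) = p.2
    rw [parS_braid]
    exact Bool.xor_false _

/-- The reflection-cocycle representation `W →* Perm (W × Bool)`. -/
def Phi : W →* Equiv.Perm (W × Bool) := cs.lift ⟨fun i => eperm cs i, eperm_liftable cs⟩

lemma Phi_simple (i : B) : Phi cs (σ i) = eperm cs i :=
  cs.lift_apply_simple (eperm_liftable cs) i

lemma Phi_fst (w : W) : ∀ t ε, ((Phi cs w) (t, ε)).1 = w * t * w⁻¹ := by
  induction w using cs.simple_induction_left with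
  | one => intro t ε; simp
  | mul_simple_left w i ih =>
    intro t ε
    rw [map_mul, Equiv.Perm.mul_apply, Phi_simple]
    rcases hq : (Phi cs w) (t, ε) with ⟨q1, q2⟩
    have h1 : q1 = w * t * w⁻¹ := by rw [← ih t ε, hq]
    show σ i * q1 * σ i = _
    rw [h1, mul_inv_rev, cs.inv_simple]
    group

lemma Phi_snd_xor (w : W) : ∀ t ε, ((Phi cs w) (t, ε)).2 = xor ε ((Phi cs w (t, false)).2) := by
  induction w using cs.simple_induction_left with
  | one => intro t ε; simp
  | mul_simple_left w i ih =>
    intro t ε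
    rw [map_mul, Equiv.Perm.mul_apply, Equiv.Perm.mul_apply, Phi_simple]
    rcases hq0 : (Phi cs w) (t, false) with ⟨q1, q2⟩
    have hqe : (Phi cs w) (t, ε) = (q1, xor ε q2) := by
      ext
      · rw [Phi_fst]
        have := Phi_fst cs w t false
        rw [hq0] at this
        exact this.symm
      · rw [ih t ε, hq0]
    rw [hqe]
    show (if q1 = σ i then !(xor ε q2) else (xor ε q2))
        = xor ε (if q1 = σ i then !q2 else q2)
    by_cases h : q1 = σ i
    · rw [if_pos h, if_pos h]
      cases ε <;> cases q2 <;> rfl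
    · rw [if_neg h, if_neg h]

/-- The left-inversion indicator. `eta w t = true` iff `t` is a left inversion of `w`
(for `t` a reflection). -/
def eta (w t : W) : Bool := ((Phi cs w⁻¹) (t, false)).2

lemma eta_one (t : W) : eta cs 1 t = false := by
  unfold eta; simp

lemma eta_cocycle (u v t : W) :
    eta cs (u * v) t = xor (eta cs u t) (eta cs v (u⁻¹ * t * u)) := by
  unfold eta
  rw [mul_inv_rev, map_mul, Equiv.Perm.mul_apply]
  rcases hq : (Phi cs u⁻¹) (t, false) with ⟨q1, q2⟩
  have h1 : q1 = u⁻¹ * t * u := by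
    have h2 := Phi_fst cs u⁻¹ t false
    rw [hq] at h2
    simpa using h2
  rw [h1, Phi_snd_xor cs v⁻¹ (u⁻¹ * t * u) q2]

lemma eta_simple (i : B) (t : W) : eta cs (σ i) t = decide (t = σ i) := by
  unfold eta
  rw [cs.inv_simple, Phi_simple]
  show (if t = σ i then !false else false) = _
  by_cases h : t = σ i <;> simp [h]

lemma eta_inv (w t : W) : eta cs w⁻¹ (w⁻¹ * t * w) = eta cs w t := by
  have h := eta_cocycle cs w w⁻¹ t
  rw [mul_inv_cancel, eta_one] at h
  cases ha : eta cs w t <;> rw [ha] at h <;>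
    cases hb : eta cs w⁻¹ (w⁻¹ * t * w) <;> rw [hb] at h <;> simp_all

lemma eta_wordProd (ω : List B) (t : W) :
    eta cs (π ω) t = decide (Odd ((cs.leftInvSeq ω).count t)) := by
  induction ω generalizing t with
  | nil =>
    rw [cs.wordProd_nil, eta_one]
    simp
  | cons i ω ih =>
    rw [cs.wordProd_cons, eta_cocycle, eta_simple]
    have hlis : cs.leftInvSeq (i :: ω) = σ i :: List.map (MulAut.conj (σ i)) (cs.leftInvSeq ω) := rfl
    rw [hlis]
    have hinv : (σ i)⁻¹ * t * σ i = σ i * t * σ i := by rw [cs.inv_simple]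
    rw [hinv, ih (σ i * t * σ i)]
    have hcount : (List.map (MulAut.conj (σ i)) (cs.leftInvSeq ω)).count t
        = (cs.leftInvSeq ω).count (σ i * t * σ i) := by
      have hmap : (MulAut.conj (σ i)) (σ i * t * σ i) = t := by
        show σ i * (σ i * t * σ i) * (σ i)⁻¹ = t
        rw [cs.inv_simple]
        exact conj_conj_invol (cs.simple_mul_simple_self i)
      conv_lhs => rw [← hmap]
      exact List.count_map_of_injective _ _ (MulAut.conj (σ i)).injective _
    rw [List.count_cons, hcount]
    by_cases h : σ i = t
    · subst h
      have hone : (if (σ i == σ i) = true then 1 else 0) = 1 := by simp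
      rw [hone]
      have htr : decide ((σ i : W) = σ i) = true := by simp
      rw [htr]
      rcases Nat.even_or_odd ((cs.leftInvSeq ω).count (σ i * σ i * σ i)) with he | ho
      · rw [decide_eq_false (Nat.not_odd_iff_even.mpr he), decide_eq_true he.add_one]
        rfl
      · rw [decide_eq_true ho, decide_eq_false (Nat.not_odd_iff_even.mpr ho.add_one)]
        rfl
    · have h' : ¬ (t = σ i) := fun hc => h hc.symm
      have hzero : (if (σ i == t) = true then 1 else 0) = 0 := by simp [h]
      rw [hzero, Nat.add_zero, decide_eq_false h', Bool.false_xor]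

lemma mem_lis_of_eta (ω : List B) (t : W) (h : eta cs (π ω) t = true) :
    t ∈ cs.leftInvSeq ω := by
  rw [eta_wordProd] at h
  have hodd : Odd ((cs.leftInvSeq ω).count t) := of_decide_eq_true h
  have : (cs.leftInvSeq ω).count t ≠ 0 := by
    intro hc; rw [hc, Nat.odd_iff] at hodd; omega
  exact List.count_pos_iff.mp (Nat.pos_of_ne_zero this)

lemma eta_of_mem_lis {ω : List B} (hred : cs.IsReduced ω) {t : W} (h : t ∈ cs.leftInvSeq ω) :
    eta cs (π ω) t = true := by
  rw [eta_wordProd]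
  have h1 : (cs.leftInvSeq ω).count t = 1 :=
    List.count_eq_one_of_mem (hred.nodup_leftInvSeq) h
  rw [h1]
  simp

lemma eta_refl_self {t : W} (ht : cs.IsReflection t) : eta cs t t = true := by
  obtain ⟨w, i, rfl⟩ := ht
  have key : eta cs (w * (σ i * w⁻¹)) (w * σ i * w⁻¹) = true := by
    rw [eta_cocycle]
    have h1 : w⁻¹ * (w * σ i * w⁻¹) * w = σ i := by group
    rw [h1, eta_cocycle, eta_simple, decide_eq_true (rfl : σ i = σ i)]
    have h2 : (σ i)⁻¹ * σ i * σ i = σ i := by group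
    rw [h2]
    have h3 : eta cs w⁻¹ (σ i) = eta cs w (w * σ i * w⁻¹) := by
      conv_lhs => rw [← h1]
      rw [show w⁻¹ * (w * σ i * w⁻¹) * w = w⁻¹ * (w * σ i * w⁻¹) * w from rfl]
      exact eta_inv cs w (w * σ i * w⁻¹)
    rw [h3]
    cases (eta cs w (w * σ i * w⁻¹)) <;> rfl
  rw [show w * (σ i * w⁻¹) = w * σ i * w⁻¹ by group] at key
  exact key

/-- Strong exchange equivalence: `eta` detects left inversions. -/
lemma eta_true_iff {t : W} (ht : cs.IsReflection t) (w : W) :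
    eta cs w t = true ↔ ℓ (t * w) < ℓ w := by
  constructor
  · intro h
    obtain ⟨ω, hred, rfl⟩ := cs.exists_reduced_word' w
    exact (cs.isLeftInversion_of_mem_leftInvSeq hred (mem_lis_of_eta cs ω t h)).2
  · intro hlen
    by_contra hfalse
    have hf : eta cs w t = false := by
      cases hx : eta cs w t
      · rfl
      · exact absurd hx hfalse
    set v := t * w with hv
    have hw : w = t * v := by
      rw [hv, ← mul_assoc, ht.mul_self, one_mul]
    have hc : eta cs (t * v) t = xor (eta cs t t) (eta cs v t) := by
      rw [eta_cocycle]
      congr 2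
      rw [inv_mul_cancel, one_mul]
    rw [← hw, hf, eta_refl_self cs ht] at hc
    have hvt : eta cs v t = true := by
      cases hx : eta cs v t
      · rw [hx] at hc; exact absurd hc.symm (by decide)
      · rfl
    obtain ⟨ω, hred, hωv⟩ := cs.exists_reduced_word' v
    rw [hωv] at hvt
    have := (cs.isLeftInversion_of_mem_leftInvSeq hred (mem_lis_of_eta cs ω t hvt)).2
    rw [← hωv] at this
    rw [← hw] at this
    omega

lemma eta_false_iff {t : W} (ht : cs.IsReflection t) (w : W) :
    eta cs w t = false ↔ ℓ w < ℓ (t * w) := by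
  have hne := ht.length_mul_right_ne w
  constructor
  · intro h
    have : ¬ (ℓ (t * w) < ℓ w) := by
      intro hc
      rw [(eta_true_iff cs ht w).mpr hc] at h
      exact absurd h (by decide)
    omega
  · intro h
    cases hx : eta cs w t
    · rfl
    · have := (eta_true_iff cs ht w).mp hx
      omega

/-- every word has a reduced sublist with the same product -/
lemma exists_reduced_sublist : ∀ (n : ℕ) (ω : List B), ω.length = n →
    ∃ ω', ω'.Sublist ω ∧ π ω' = π ω ∧ cs.IsReduced ω' := by
  intro n
  induction n using Nat.strong_induction_on with
  | _ n ih =>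
    intro ω hn
    by_cases hred : cs.IsReduced ω
    · exact ⟨ω, List.Sublist.refl ω, rfl, hred⟩
    · -- ω is nonempty
      have hlen : ω.length ≠ 0 := by
        intro hc
        apply hred
        rw [List.length_eq_zero_iff] at hc
        subst hc
        show ℓ (π []) = _
        rw [cs.wordProd_nil, cs.length_one]
        rfl
      have hex : ∃ j, ¬ cs.IsReduced (ω.take (j+1)) := by
        refine ⟨ω.length - 1, ?_⟩
        rwa [Nat.sub_add_cancel (Nat.pos_of_ne_zero hlen), List.take_length]
      set j₀ := Nat.find hex with hj₀
      have hP : ¬ cs.IsReduced (ω.take (j₀+1)) := Nat.find_spec hex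
      have hj₀lt : j₀ < ω.length := by
        have : j₀ ≤ ω.length - 1 := Nat.find_min' hex (by
          rwa [Nat.sub_add_cancel (Nat.pos_of_ne_zero hlen), List.take_length])
        omega
      have hpre : cs.IsReduced (ω.take j₀) := by
        rcases Nat.eq_zero_or_pos j₀ with h0 | hpos
        · rw [h0, List.take_zero]
          show ℓ (π []) = _
          rw [cs.wordProd_nil, cs.length_one]
          rfl
        · have := Nat.find_min hex (show j₀ - 1 < j₀ by omega)
          rw [not_not] at this
          rwa [Nat.sub_add_cancel hpos] at this
      have hxlen : ℓ (π (ω.take j₀)) = j₀ := by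
        have := hpre
        unfold CoxeterSystem.IsReduced at this
        rwa [List.length_take, min_eq_left hj₀lt.le] at this
      set b := ω[j₀]'hj₀lt with hb
      have htake : ω.take (j₀+1) = ω.take j₀ ++ [b] := by
        rw [List.take_succ, List.getElem?_eq_getElem hj₀lt]
        rfl
      have hπtake : π (ω.take (j₀+1)) = π (ω.take j₀) * σ b := by
        rw [htake, cs.wordProd_append, cs.wordProd_singleton]
      have hlb : ℓ (π (ω.take j₀) * σ b) + 1 = j₀ := by
        have hne : ℓ (π (ω.take (j₀+1))) ≠ (ω.take (j₀+1)).length := hP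
        rw [List.length_take, min_eq_left (by omega), hπtake] at hne
        rcases cs.length_mul_simple (π (ω.take j₀)) b with h | h
        · rw [hxlen] at h; omega
        · rw [hxlen] at h; omega
      have hj₀pos : 1 ≤ j₀ := by omega
      have hlb1 : ℓ (π (ω.take j₀) * σ b) = j₀ - 1 := by omega
      set x := π (ω.take j₀) with hx
      set t := x * σ b * x⁻¹ with ht
      have htrefl : cs.IsReflection t := ⟨x, b, rfl⟩
      have htx : t * x = x * σ b := by rw [ht]; group
      have hetax : eta cs x t = true := by
        rw [eta_true_iff cs htrefl x, htx, hlb1, hxlen]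
        omega
      have hmem : t ∈ cs.leftInvSeq (ω.take j₀) := by
        apply mem_lis_of_eta
        rw [← hx]
        exact hetax
      obtain ⟨nn, hnn, hgetel⟩ := List.mem_iff_getElem.mp hmem
      have hgetd : (cs.leftInvSeq (ω.take j₀)).getD nn 1 = t := by
        rw [List.getD_eq_getElem _ _ hnn, hgetel]
      have herase : t * x = π ((ω.take j₀).eraseIdx nn) := by
        rw [← hgetd, hx]
        exact cs.getD_leftInvSeq_mul_wordProd (ω.take j₀) nn
      -- the new word
      set ω'' := (ω.take j₀).eraseIdx nn ++ ω.drop (j₀+1) with hω''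
      have hπω'' : π ω'' = π ω := by
        rw [hω'', cs.wordProd_append, ← herase, htx]
        conv_rhs => rw [← List.take_append_drop (j₀+1) ω]
        rw [cs.wordProd_append, hπtake]
      have hsub : ω''.Sublist ω := by
        have h1 : ((ω.take j₀).eraseIdx nn).Sublist (ω.take j₀) := List.eraseIdx_sublist _ nn
        have h2 : (ω.take j₀).Sublist (ω.take (j₀+1)) := by
          have : ω.take j₀ = (ω.take (j₀+1)).take j₀ := by
            rw [List.take_take, min_eq_left (by omega)]
          rw [this]
          exact List.take_sublist _ _
        have h3 := (h1.trans h2).append (List.Sublist.refl (ω.drop (j₀+1)))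
        rwa [List.take_append_drop] at h3
      have hlt : ω''.length < n := by
        rw [hω'', List.length_append, List.length_eraseIdx]
        have hlislen : nn < (ω.take j₀).length := by
          have := hnn
          rwa [cs.length_leftInvSeq] at this
        rw [if_pos hlislen, List.length_take, List.length_drop,
            min_eq_left hj₀lt.le]
        omega
      obtain ⟨ω', hs', hπ', hred'⟩ := ih ω''.length hlt ω'' rfl
      rw [hπω''] at hπ'
      exact ⟨ω', hs'.trans hsub, hπ', hred'⟩

/-- an element of infinite order has powers of unbounded length -/
lemma exists_power_length_gt (z : W) (hz : ∀ n : ℕ, n ≠ 0 → z^n ≠ 1) (L : ℕ) :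
    ∃ k : ℕ, k ≠ 0 ∧ L < ℓ (z^k) := by
  by_contra hcon
  push_neg at hcon
  obtain ⟨ω₀, hω₀⟩ := cs.wordProd_surjective z
  have hrep : ∀ k : ℕ, π (List.flatten (List.replicate k ω₀)) = z^k := by
    intro k
    induction k with
    | zero => simp
    | succ k ihk =>
      rw [List.replicate_succ, List.flatten_cons, cs.wordProd_append, ihk, hω₀, pow_succ']
  have hchoice : ∀ k : ℕ, ∃ ωk : List B, ωk.Sublist (List.flatten (List.replicate (k+1) ω₀)) ∧
      π ωk = z^(k+1) ∧ cs.IsReduced ωk := by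
    intro k
    obtain ⟨ω', hs, hπ, hr⟩ := exists_reduced_sublist cs _ (List.flatten (List.replicate (k+1) ω₀)) rfl
    exact ⟨ω', hs, by rw [hπ, hrep], hr⟩
  choose ωf hωsub hωπ hωred using hchoice
  have hmemω : ∀ k, ∀ b ∈ ωf k, b ∈ ω₀ := by
    intro k b hbk
    have := (hωsub k).mem hbk
    rw [List.mem_flatten] at this
    obtain ⟨l, hl, hbl⟩ := this
    rwa [List.eq_of_mem_replicate hl] at hbl
  have hlenω : ∀ k, (ωf k).length ≤ L := by
    intro k
    have h1 : (ωf k).length = ℓ (z^(k+1)) := by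
      rw [← hωπ k]; exact (hωred k).symm
    rw [h1]
    exact hcon (k+1) (by omega)
  -- finiteness
  haveI : Finite {b // b ∈ ω₀} := (ω₀.finite_toSet).to_subtype
  have hSfin : ({l : List B | l.length ≤ L ∧ ∀ b ∈ l, b ∈ ω₀}).Finite := by
    have himg : {l : List B | l.length ≤ L ∧ ∀ b ∈ l, b ∈ ω₀}
        ⊆ (fun l : List {b // b ∈ ω₀} => l.map Subtype.val) '' {l | l.length ≤ L} := by
      rintro l ⟨hl1, hl2⟩
      refine ⟨l.pmap (fun b hb => (⟨b, hb⟩ : {b // b ∈ ω₀})) hl2, ?_, ?_⟩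
      · show _ ≤ L
        rwa [List.length_pmap]
      · show List.map Subtype.val (List.pmap (fun b hb => (⟨b, hb⟩ : {b // b ∈ ω₀})) l hl2) = l
        simp [List.map_pmap]
    exact Set.Finite.subset ((List.finite_length_le _ L).image _) himg
  haveI : Finite ↥{l : List B | l.length ≤ L ∧ ∀ b ∈ l, b ∈ ω₀} := hSfin.to_subtype
  have hfun : ∀ k : ℕ, ωf k ∈ {l : List B | l.length ≤ L ∧ ∀ b ∈ l, b ∈ ω₀} := by
    intro k; exact ⟨hlenω k, hmemω k⟩
  obtain ⟨k1, k2, hne, heq⟩ := Finite.exists_ne_map_eq_of_infinite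
    (fun k : ℕ => (⟨ωf k, hfun k⟩ : ↥{l : List B | l.length ≤ L ∧ ∀ b ∈ l, b ∈ ω₀}))
  have heqω : ωf k1 = ωf k2 := congrArg Subtype.val heq
  have hpow : z^(k1+1) = z^(k2+1) := by rw [← hωπ k1, ← hωπ k2, heqω]
  rcases Nat.lt_or_ge k1 k2 with hlt | hge
  · apply hz (k2 - k1) (by omega)
    have h2 : z^(k1+1) * z^(k2-k1) = z^(k1+1) * 1 := by
      rw [mul_one, ← pow_add, hpow]
      congr 1
      omega
    exact mul_left_cancel h2
  · have hlt2 : k2 < k1 := by omega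
    apply hz (k1 - k2) (by omega)
    have h2 : z^(k2+1) * z^(k1-k2) = z^(k2+1) * 1 := by
      rw [mul_one, ← pow_add, ← hpow]
      congr 1
      omega
    exact mul_left_cancel h2

section Dihedral

variable (z t0 : W)

/-- the family of reflections of the dihedral pair -/
def sig (k : ℤ) : W := z^k * t0

variable {z t0}

/-- abbreviation for the hypotheses -/
def HConj (z t0 : W) : Prop := t0 * z * t0 = z⁻¹

section Basic

lemma t0_refl (hrefl : ∀ k : ℤ, cs.IsReflection (z^k * t0)) : cs.IsReflection t0 := by
  have := hrefl 0
  rwa [zpow_zero, one_mul] at this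

lemma sig_refl (hrefl : ∀ k : ℤ, cs.IsReflection (z^k * t0)) (k : ℤ) :
    cs.IsReflection (sig z t0 k) := hrefl k

lemma t0_inv (hrefl : ∀ k : ℤ, cs.IsReflection (z^k * t0)) : t0⁻¹ = t0 :=
  (t0_refl cs hrefl).inv

lemma t0_conj_zpow (hconj : t0 * z * t0 = z⁻¹)
    (hrefl : ∀ k : ℤ, cs.IsReflection (z^k * t0)) (m : ℤ) : t0 * z^m * t0 = z^(-m) := by
  have h1 : (MulAut.conj t0) (z^m) = ((MulAut.conj t0) z)^m := map_zpow _ _ _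
  have h2 : (MulAut.conj t0) z = z⁻¹ := by
    show t0 * z * t0⁻¹ = z⁻¹
    rw [t0_inv cs hrefl]
    exact hconj
  have h3 : (MulAut.conj t0) (z^m) = t0 * z^m * t0 := by
    show t0 * z^m * t0⁻¹ = _
    rw [t0_inv cs hrefl]
  rw [h3, h2] at h1
  rw [h1, inv_zpow, zpow_neg]

lemma t0_mul_zpow (hconj : t0 * z * t0 = z⁻¹)
    (hrefl : ∀ k : ℤ, cs.IsReflection (z^k * t0)) (m : ℤ) : t0 * z^m = z^(-m) * t0 := by
  have h := t0_conj_zpow cs hconj hrefl m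
  have ht : t0 * t0 = 1 := (t0_refl cs hrefl).mul_self
  calc t0 * z^m = t0 * z^m * (t0 * t0) := by rw [ht, mul_one]
    _ = (t0 * z^m * t0) * t0 := by group
    _ = z^(-m) * t0 := by rw [h]

lemma sig_mul (hconj : t0 * z * t0 = z⁻¹)
    (hrefl : ∀ k : ℤ, cs.IsReflection (z^k * t0)) (a b : ℤ) :
    sig z t0 a * sig z t0 b = z^(a-b) := by
  unfold sig
  calc z^a * t0 * (z^b * t0) = z^a * (t0 * z^b * t0) := by group
    _ = z^a * z^(-b) := by rw [t0_conj_zpow cs hconj hrefl]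
    _ = z^(a-b) := by rw [sub_eq_add_neg, ← zpow_add]

lemma sig_sq (hconj : t0 * z * t0 = z⁻¹)
    (hrefl : ∀ k : ℤ, cs.IsReflection (z^k * t0)) (k : ℤ) :
    sig z t0 k * sig z t0 k = 1 := by
  rw [sig_mul cs hconj hrefl, sub_self, zpow_zero]

lemma sig_inv (hconj : t0 * z * t0 = z⁻¹)
    (hrefl : ∀ k : ℤ, cs.IsReflection (z^k * t0)) (k : ℤ) :
    (sig z t0 k)⁻¹ = sig z t0 k :=
  inv_eq_of_mul_eq_one_right (sig_sq cs hconj hrefl k)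

lemma sig_mul_zpow (hconj : t0 * z * t0 = z⁻¹)
    (hrefl : ∀ k : ℤ, cs.IsReflection (z^k * t0)) (j m : ℤ) :
    sig z t0 j * z^m = sig z t0 (j - m) := by
  unfold sig
  rw [mul_assoc, t0_mul_zpow cs hconj hrefl, ← mul_assoc, ← zpow_add]
  rw [show (j + -m) = j - m by ring]

lemma zpow_mul_sig (m j : ℤ) : z^m * sig z t0 j = sig z t0 (m + j) := by
  unfold sig
  rw [← mul_assoc, ← zpow_add]

lemma sig_conj (hconj : t0 * z * t0 = z⁻¹)
    (hrefl : ∀ k : ℤ, cs.IsReflection (z^k * t0)) (a b : ℤ) :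
    sig z t0 a * sig z t0 b * sig z t0 a = sig z t0 (2*a - b) := by
  rw [sig_mul cs hconj hrefl, zpow_mul_sig]
  rw [show (a - b + a) = 2*a - b by ring]

lemma eta_sig_mul (hconj : t0 * z * t0 = z⁻¹)
    (hrefl : ∀ k : ℤ, cs.IsReflection (z^k * t0)) (k : ℤ) (w : W) (j : ℤ) :
    eta cs (sig z t0 k * w) (sig z t0 j)
    = xor (eta cs (sig z t0 k) (sig z t0 j)) (eta cs w (sig z t0 (2*k - j))) := by
  rw [eta_cocycle]
  congr 2
  rw [sig_inv cs hconj hrefl, sig_conj cs hconj hrefl]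

lemma eta_zpow_mul (hconj : t0 * z * t0 = z⁻¹)
    (hrefl : ∀ k : ℤ, cs.IsReflection (z^k * t0)) (m : ℤ) (w : W) (j : ℤ) :
    eta cs (z^m * w) (sig z t0 j)
    = xor (eta cs (z^m) (sig z t0 j)) (eta cs w (sig z t0 (j - 2*m))) := by
  rw [eta_cocycle]
  congr 2
  show (z^m)⁻¹ * (sig z t0 j) * z^m = _
  unfold sig
  rw [← zpow_neg]
  calc z^(-m) * (z^j * t0) * z^m = z^(-m) * z^j * (t0 * z^m) := by group
    _ = z^(-m) * z^j * (z^(-m) * t0) := by rw [t0_mul_zpow cs hconj hrefl]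
    _ = (z^(-m) * z^j * z^(-m)) * t0 := by group
    _ = z^(j - 2*m) * t0 := by
        rw [← zpow_add, ← zpow_add, show (-m + j + -m) = j - 2*m by ring]

lemma eta_sig_iff (hrefl : ∀ k : ℤ, cs.IsReflection (z^k * t0)) (w : W) (j : ℤ) :
    eta cs w (sig z t0 j) = true ↔ ℓ ((sig z t0 j) * w) < ℓ w :=
  eta_true_iff cs (sig_refl cs hrefl j) w

end Basic

section Classification

private lemma xor_decide (p q : Prop) [Decidable p] [Decidable q] :
    xor (decide p) (decide q) = decide ((p ∧ ¬q) ∨ (¬p ∧ q)) := by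
  by_cases hp : p <;> by_cases hq : q <;>
    simp [hp, hq]

lemma sig_zero : sig z t0 0 = t0 := by
  unfold sig; rw [zpow_zero, one_mul]

variable (hconj : t0 * z * t0 = z⁻¹) (hrefl : ∀ k : ℤ, cs.IsReflection (z^k * t0))
variable (hc0 : ∀ j : ℤ, eta cs t0 (sig z t0 j) = decide (j = 0))
variable (hc1 : ∀ j : ℤ, eta cs (sig z t0 1) (sig z t0 j) = decide (j = 1))

lemma eta_sig_sig_ge (hconj : t0 * z * t0 = z⁻¹)
    (hrefl : ∀ k : ℤ, cs.IsReflection (z^k * t0))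
    (hc0 : ∀ j : ℤ, eta cs t0 (sig z t0 j) = decide (j = 0))
    (hc1 : ∀ j : ℤ, eta cs (sig z t0 1) (sig z t0 j) = decide (j = 1)) :
    ∀ n : ℕ, ∀ j : ℤ,
    eta cs (sig z t0 ((n:ℤ)+1)) (sig z t0 j) = decide (1 ≤ j ∧ j ≤ 2*((n:ℤ)+1)-1) := by
  intro n
  induction n with
  | zero =>
    intro j
    rw [show ((0:ℕ):ℤ)+1 = 1 by norm_num, hc1 j]
    rw [decide_eq_decide]
    omega
  | succ n ih =>
    intro j
    have hdecomp : sig z t0 ((n:ℤ)+1+1) = sig z t0 1 * (sig z t0 0 * sig z t0 ((n:ℤ)+1)) := by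
      rw [sig_mul cs hconj hrefl 0 ((n:ℤ)+1)]
      rw [show sig z t0 1 * z ^ ((0:ℤ) - ((n:ℤ)+1)) = sig z t0 (1 - (0 - ((n:ℤ)+1)))
        from sig_mul_zpow cs hconj hrefl 1 _]
      congr 1
      ring
    have hstep1 := eta_sig_mul cs hconj hrefl 1 (sig z t0 0 * sig z t0 ((n:ℤ)+1)) j
    have hstep2 := eta_sig_mul cs hconj hrefl 0 (sig z t0 ((n:ℤ)+1)) (2*1 - j)
    rw [show ((n+1:ℕ) : ℤ) = (n:ℤ)+1 by push_cast; ring]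
    rw [hdecomp, hstep1, hstep2, hc1, sig_zero, hc0, ih]
    rw [show (2*(0:ℤ) - (2*1 - j)) = j - 2 by ring]
    rw [xor_decide, xor_decide, decide_eq_decide]
    omega

lemma eta_sig_sig_le (hconj : t0 * z * t0 = z⁻¹)
    (hrefl : ∀ k : ℤ, cs.IsReflection (z^k * t0))
    (hc0 : ∀ j : ℤ, eta cs t0 (sig z t0 j) = decide (j = 0))
    (hc1 : ∀ j : ℤ, eta cs (sig z t0 1) (sig z t0 j) = decide (j = 1)) :
    ∀ n : ℕ, ∀ j : ℤ,
    eta cs (sig z t0 (-(n:ℤ))) (sig z t0 j) = decide (2*(-(n:ℤ)) ≤ j ∧ j ≤ 0) := by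
  intro n
  induction n with
  | zero =>
    intro j
    rw [show (-((0:ℕ):ℤ)) = 0 by norm_num]
    rw [sig_zero, hc0 j, decide_eq_decide]
    omega
  | succ n ih =>
    intro j
    have hdecomp : sig z t0 (-((n:ℤ)+1)) = sig z t0 0 * (sig z t0 1 * sig z t0 (-(n:ℤ))) := by
      rw [sig_mul cs hconj hrefl 1 (-(n:ℤ))]
      rw [show sig z t0 0 * z ^ ((1:ℤ) - (-(n:ℤ))) = sig z t0 (0 - (1 - (-(n:ℤ))))
        from sig_mul_zpow cs hconj hrefl 0 _]
      congr 1
      ring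
    have hstep1 := eta_sig_mul cs hconj hrefl 0 (sig z t0 1 * sig z t0 (-(n:ℤ))) j
    have hstep2 := eta_sig_mul cs hconj hrefl 1 (sig z t0 (-(n:ℤ))) (2*0 - j)
    rw [show (-((n+1:ℕ) : ℤ)) = -((n:ℤ)+1) by push_cast; ring]
    rw [hdecomp, hstep1, hstep2, sig_zero, hc0, hc1, ih]
    rw [show (2*(1:ℤ) - (2*0 - j)) = j + 2 by ring]
    rw [xor_decide, xor_decide, decide_eq_decide]
    omega

lemma eta_sig_sig_ge' (hconj : t0 * z * t0 = z⁻¹)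
    (hrefl : ∀ k : ℤ, cs.IsReflection (z^k * t0))
    (hc0 : ∀ j : ℤ, eta cs t0 (sig z t0 j) = decide (j = 0))
    (hc1 : ∀ j : ℤ, eta cs (sig z t0 1) (sig z t0 j) = decide (j = 1))
    (k : ℤ) (hk : 1 ≤ k) (j : ℤ) :
    eta cs (sig z t0 k) (sig z t0 j) = decide (1 ≤ j ∧ j ≤ 2*k-1) := by
  obtain ⟨n, hn⟩ := Int.eq_ofNat_of_zero_le (show (0:ℤ) ≤ k - 1 by omega)
  have hk' : k = (n:ℤ)+1 := by omega
  rw [hk']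
  exact eta_sig_sig_ge cs hconj hrefl hc0 hc1 n j

lemma eta_sig_sig_le' (hconj : t0 * z * t0 = z⁻¹)
    (hrefl : ∀ k : ℤ, cs.IsReflection (z^k * t0))
    (hc0 : ∀ j : ℤ, eta cs t0 (sig z t0 j) = decide (j = 0))
    (hc1 : ∀ j : ℤ, eta cs (sig z t0 1) (sig z t0 j) = decide (j = 1))
    (k : ℤ) (hk : k ≤ 0) (j : ℤ) :
    eta cs (sig z t0 k) (sig z t0 j) = decide (2*k ≤ j ∧ j ≤ 0) := by
  obtain ⟨n, hn⟩ := Int.eq_ofNat_of_zero_le (show (0:ℤ) ≤ -k by omega)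
  have hk' : k = -(n:ℤ) := by omega
  rw [hk']
  exact eta_sig_sig_le cs hconj hrefl hc0 hc1 n j

/-- classification of inversion traces on the dihedral reflection set:
they are "anchored intervals". -/
theorem anch (hconj : t0 * z * t0 = z⁻¹)
    (hrefl : ∀ k : ℤ, cs.IsReflection (z^k * t0))
    (hc0 : ∀ j : ℤ, eta cs t0 (sig z t0 j) = decide (j = 0))
    (hc1 : ∀ j : ℤ, eta cs (sig z t0 1) (sig z t0 j) = decide (j = 1)) (w : W) :
    (∃ a : ℤ, a ≤ 1 ∧ ∀ j, eta cs w (sig z t0 j) = decide (a ≤ j ∧ j ≤ 0)) ∨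
    (∃ b : ℤ, 0 ≤ b ∧ ∀ j, eta cs w (sig z t0 j) = decide (1 ≤ j ∧ j ≤ b)) := by
  generalize hn : ℓ w = n
  induction n using Nat.strong_induction_on generalizing w with
  | _ n ih =>
    by_cases hE : ∀ j, eta cs w (sig z t0 j) = false
    · left
      exact ⟨1, le_refl 1, fun j => by rw [hE j]; symm; apply decide_eq_false; omega⟩
    · push_neg at hE
      obtain ⟨k, hk⟩ := hE
      have hktrue : eta cs w (sig z t0 k) = true := by
        cases hx : eta cs w (sig z t0 k)
        · exact absurd hx hk
        · rfl
      have hlt : ℓ (sig z t0 k * w) < ℓ w := (eta_sig_iff cs hrefl w k).mp hktrue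
      have hw : w = sig z t0 k * (sig z t0 k * w) := by
        rw [← mul_assoc, sig_sq cs hconj hrefl, one_mul]
      have hexp : ∀ j, eta cs w (sig z t0 j)
          = xor (eta cs (sig z t0 k) (sig z t0 j))
              (eta cs (sig z t0 k * w) (sig z t0 (2*k - j))) := by
        intro j
        conv_lhs => rw [hw]
        exact eta_sig_mul cs hconj hrefl k (sig z t0 k * w) j
      rw [hn] at hlt
      rcases ih (ℓ (sig z t0 k * w)) hlt (sig z t0 k * w) rfl with ⟨a, ha, hS⟩ | ⟨b, hb, hS⟩
      · by_cases hkpos : 1 ≤ k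
        · right
          refine ⟨2*k - a, by omega, fun j => ?_⟩
          rw [hexp j, eta_sig_sig_ge' cs hconj hrefl hc0 hc1 k hkpos j, hS (2*k - j),
            xor_decide, decide_eq_decide]
          omega
        · have hkle : k ≤ 0 := by omega
          by_cases hcase : a < 2*k
          · right
            refine ⟨2*k - a, by omega, fun j => ?_⟩
            rw [hexp j, eta_sig_sig_le' cs hconj hrefl hc0 hc1 k hkle j, hS (2*k - j),
              xor_decide, decide_eq_decide]
            omega
          · left
            refine ⟨2*k - a + 1, by omega, fun j => ?_⟩
            rw [hexp j, eta_sig_sig_le' cs hconj hrefl hc0 hc1 k hkle j, hS (2*k - j),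
              xor_decide, decide_eq_decide]
            omega
      · by_cases hkpos : 1 ≤ k
        · by_cases hcase : b ≤ 2*k - 1
          · right
            refine ⟨2*k - b - 1, by omega, fun j => ?_⟩
            rw [hexp j, eta_sig_sig_ge' cs hconj hrefl hc0 hc1 k hkpos j, hS (2*k - j),
              xor_decide, decide_eq_decide]
            omega
          · left
            refine ⟨2*k - b, by omega, fun j => ?_⟩
            rw [hexp j, eta_sig_sig_ge' cs hconj hrefl hc0 hc1 k hkpos j, hS (2*k - j),
              xor_decide, decide_eq_decide]
            omega
        · have hkle : k ≤ 0 := by omega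
          left
          refine ⟨2*k - b, by omega, fun j => ?_⟩
          rw [hexp j, eta_sig_sig_le' cs hconj hrefl hc0 hc1 k hkle j, hS (2*k - j),
            xor_decide, decide_eq_decide]
          omega

/-- the key impossibility: at consecutive indices, not all four sign patterns occur. -/
theorem no_four (hconj : t0 * z * t0 = z⁻¹)
    (hrefl : ∀ k : ℤ, cs.IsReflection (z^k * t0))
    (hc0 : ∀ j : ℤ, eta cs t0 (sig z t0 j) = decide (j = 0))
    (hc1 : ∀ j : ℤ, eta cs (sig z t0 1) (sig z t0 j) = decide (j = 1))
    (p : ℤ) (w1 w2 w3 : W)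
    (h1a : eta cs w1 (sig z t0 p) = true) (h1b : eta cs w1 (sig z t0 (p+1)) = true)
    (h2a : eta cs w2 (sig z t0 p) = true) (h2b : eta cs w2 (sig z t0 (p+1)) = false)
    (h3a : eta cs w3 (sig z t0 p) = false) (h3b : eta cs w3 (sig z t0 (p+1)) = true) :
    False := by
  rcases lt_trichotomy p 0 with hp | hp | hp
  · rcases anch cs hconj hrefl hc0 hc1 w2 with ⟨a, ha, hS⟩ | ⟨b, hb, hS⟩
    · rw [hS p] at h2a
      rw [hS (p+1)] at h2b
      have ha2 := of_decide_eq_true h2a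
      have hb2 := of_decide_eq_false h2b
      omega
    · rw [hS p] at h2a
      have ha2 := of_decide_eq_true h2a
      omega
  · subst hp
    rcases anch cs hconj hrefl hc0 hc1 w1 with ⟨a, ha, hS⟩ | ⟨b, hb, hS⟩
    · rw [hS (0+1)] at h1b
      have hb1 := of_decide_eq_true h1b
      omega
    · rw [hS 0] at h1a
      have ha1 := of_decide_eq_true h1a
      omega
  · rcases anch cs hconj hrefl hc0 hc1 w3 with ⟨a, ha, hS⟩ | ⟨b, hb, hS⟩
    · rw [hS (p+1)] at h3b
      have hb3 := of_decide_eq_true h3b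
      omega
    · rw [hS p] at h3a
      rw [hS (p+1)] at h3b
      have ha3 := of_decide_eq_false h3a
      have hb3 := of_decide_eq_true h3b
      omega

end Classification

end Dihedral

section Existence

/-- an involution conjugating `zz` to `zz⁻¹` conjugates all powers -/
lemma invol_conj_zpow {g zz : W} (hg : g * g = 1) (h : g * zz * g = zz⁻¹) (m : ℤ) :
    g * zz^m * g = zz^(-m) := by
  have hginv : g⁻¹ = g := inv_eq_of_mul_eq_one_right hg
  have h1 : (MulAut.conj g) (zz^m) = ((MulAut.conj g) zz)^m := map_zpow _ _ _
  have h2 : (MulAut.conj g) zz = zz⁻¹ := by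
    show g * zz * g⁻¹ = zz⁻¹
    rw [hginv]
    exact h
  have h3 : (MulAut.conj g) (zz^m) = g * zz^m * g := by
    show g * zz^m * g⁻¹ = _
    rw [hginv]
  rw [h3, h2] at h1
  rw [h1, inv_zpow, zpow_neg]

variable {a b : W}

lemma conj_ab (ha : cs.IsReflection a) (hb : cs.IsReflection b) :
    a * (a*b) * a = (a*b)⁻¹ := by
  rw [mul_inv_rev, ha.inv, hb.inv]
  calc a * (a*b) * a = (a*a)*(b*a) := by group
    _ = b * a := by rw [ha.mul_self, one_mul]

lemma move_a (ha : cs.IsReflection a) (hb : cs.IsReflection b) (m : ℤ) :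
    a * (a*b)^m = (a*b)^(-m) * a := by
  have hconj : a * (a*b)^m * a = (a*b)^(-m) :=
    invol_conj_zpow ha.mul_self (conj_ab cs ha hb) m
  calc a * (a*b)^m = a * (a*b)^m * (a * a) := by rw [ha.mul_self, mul_one]
    _ = (a * (a*b)^m * a) * a := by group
    _ = (a*b)^(-m) * a := by rw [hconj]

lemma refl_rho (ha : cs.IsReflection a) (hb : cs.IsReflection b) (k : ℤ) :
    cs.IsReflection ((a*b)^k * a) := by
  have h1 : ∀ c : ℤ, a * (a*b)^(-c) = (a*b)^c * a := by
    intro c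
    rw [move_a cs ha hb (-c), neg_neg]
  rcases Int.even_or_odd k with ⟨c, hc⟩ | ⟨c, hc⟩
  · have heq : (a*b)^k * a = (a*b)^c * a * ((a*b)^c)⁻¹ := by
      calc (a*b)^k * a = (a*b)^c * ((a*b)^c * a) := by
            rw [← mul_assoc, ← zpow_add, ← hc]
        _ = (a*b)^c * (a * (a*b)^(-c)) := by rw [h1]
        _ = (a*b)^c * a * ((a*b)^c)⁻¹ := by rw [zpow_neg]; group
    rw [heq]
    exact ha.conj ((a*b)^c)
  · have hba : cs.IsReflection ((a*b) * a) := by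
      have heq2 : (a*b) * a = a * b * a⁻¹ := by rw [ha.inv]
      rw [heq2]
      exact hb.conj a
    have heq : (a*b)^k * a = (a*b)^c * ((a*b)*a) * ((a*b)^c)⁻¹ := by
      calc (a*b)^k * a = (a*b)^c * ((a*b) * ((a*b)^c * a)) := by
            rw [hc]
            have hstep : (a*b)^c * ((a*b) * ((a*b)^c * a)) = ((a*b)^c * (a*b)^(1:ℤ) * (a*b)^c) * a := by
              rw [zpow_one]
              simp only [mul_assoc]
            rw [hstep, ← zpow_add, ← zpow_add, show c + 1 + c = 2*c + 1 by ring]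
        _ = (a*b)^c * ((a*b) * (a * (a*b)^(-c))) := by rw [h1]
        _ = (a*b)^c * ((a*b)*a) * ((a*b)^c)⁻¹ := by rw [zpow_neg]; group
    rw [heq]
    exact hba.conj ((a*b)^c)

lemma b_eq (ha : cs.IsReflection a) (hb : cs.IsReflection b) :
    b = (a*b)^(-1:ℤ) * a := by
  rw [zpow_neg_one]
  calc b = b⁻¹ * (a⁻¹ * a) := by rw [inv_mul_cancel, mul_one, hb.inv]
    _ = (a*b)⁻¹ * a := by rw [mul_inv_rev]; group

/-- canonicity from shortness: a reflection shorter than every rotation has a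
singleton inversion trace -/
lemma canonical_of_short {z t0 : W} (hconj : t0 * z * t0 = z⁻¹)
    (hrefl : ∀ k : ℤ, cs.IsReflection (z^k * t0)) {lam : ℕ}
    (hminrot : ∀ m : ℤ, m ≠ 0 → lam ≤ ℓ (z^m))
    (c : ℤ) (hc : ℓ (sig z t0 c) < lam) (j : ℤ) :
    eta cs (sig z t0 c) (sig z t0 j) = decide (j = c) := by
  by_cases hj : j = c
  · subst hj
    rw [decide_eq_true rfl]
    exact eta_refl_self cs (sig_refl cs hrefl j)
  · rw [decide_eq_false hj]
    cases hx : eta cs (sig z t0 c) (sig z t0 j)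
    · rfl
    · exfalso
      have hlen := (eta_sig_iff cs hrefl (sig z t0 c) j).mp hx
      rw [sig_mul cs hconj hrefl] at hlen
      have := hminrot (j - c) (by omega)
      omega

/-- inversion trace of a rotation, described by lengths -/
lemma rot_eta {z t0 : W} (hconj : t0 * z * t0 = z⁻¹)
    (hrefl : ∀ k : ℤ, cs.IsReflection (z^k * t0)) (m j : ℤ) :
    eta cs (z^m) (sig z t0 j) = decide (ℓ (sig z t0 (j - m)) < ℓ (z^m)) := by
  by_cases h : ℓ (sig z t0 (j-m)) < ℓ (z^m)
  · rw [decide_eq_true h]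
    apply (eta_sig_iff cs hrefl (z^m) j).mpr
    rwa [sig_mul_zpow cs hconj hrefl]
  · rw [decide_eq_false h]
    cases hx : eta cs (z^m) (sig z t0 j)
    · rfl
    · exfalso
      have := (eta_sig_iff cs hrefl (z^m) j).mp hx
      rw [sig_mul_zpow cs hconj hrefl] at this
      exact h this

/-- the inversion trace of the minimal rotation `z^μ` -/
lemma S_z_mu {z t0 : W} (hconj : t0 * z * t0 = z⁻¹)
    (hrefl : ∀ k : ℤ, cs.IsReflection (z^k * t0)) {lam : ℕ}
    (hminrot : ∀ m : ℤ, m ≠ 0 → lam ≤ ℓ (z^m))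
    {μ : ℤ} (hμ0 : μ ≠ 0) (h0 : ℓ (sig z t0 0) < lam) (hμshort : ℓ (sig z t0 μ) < lam)
    (j : ℤ) :
    eta cs (z^μ) (sig z t0 j) = decide (j = μ ∨ j = 2*μ) := by
  have hdecomp : z^μ = sig z t0 μ * sig z t0 0 := by
    rw [sig_mul cs hconj hrefl, sub_zero]
  rw [hdecomp, eta_sig_mul cs hconj hrefl μ (sig z t0 0) j]
  rw [canonical_of_short cs hconj hrefl hminrot μ hμshort j,
    canonical_of_short cs hconj hrefl hminrot 0 h0 (2*μ - j)]
  rw [xor_decide, decide_eq_decide]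
  omega

/-- description of the short set -/
lemma C_eq {z t0 : W} (hconj : t0 * z * t0 = z⁻¹)
    (hrefl : ∀ k : ℤ, cs.IsReflection (z^k * t0)) {lam : ℕ}
    (hminrot : ∀ m : ℤ, m ≠ 0 → lam ≤ ℓ (z^m))
    {μ : ℤ} (hμ0 : μ ≠ 0) (hμlam : ℓ (z^μ) = lam)
    (h0 : ℓ (sig z t0 0) < lam) (hμshort : ℓ (sig z t0 μ) < lam)
    (i : ℤ) :
    ℓ (sig z t0 i) < lam ↔ (i = 0 ∨ i = μ) := by
  have h1 := rot_eta cs hconj hrefl μ (i + μ)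
  have h2 := S_z_mu cs hconj hrefl hminrot hμ0 h0 hμshort (i + μ)
  rw [h1] at h2
  rw [show i + μ - μ = i by ring, hμlam] at h2
  have h3 := decide_eq_decide.mp h2
  constructor
  · intro h
    have := h3.mp h
    omega
  · intro h
    apply h3.mpr
    omega

lemma sig_injective {z t0 : W} (hconj : t0 * z * t0 = z⁻¹)
    (hrefl : ∀ k : ℤ, cs.IsReflection (z^k * t0))
    (hinf : ∀ n : ℤ, n ≠ 0 → z^n ≠ 1) :
    Function.Injective (sig z t0) := by
  intro i j hij
  by_contra hne
  have h1 : sig z t0 i * sig z t0 j = 1 := by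
    rw [hij, sig_sq cs hconj hrefl]
  rw [sig_mul cs hconj hrefl] at h1
  exact hinf (i - j) (by omega) h1

lemma eta_rot_false {z t0 : W} (hconj : t0 * z * t0 = z⁻¹)
    (hrefl : ∀ k : ℤ, cs.IsReflection (z^k * t0)) :
    ∀ (k : ℕ) (j : ℤ),
    (∀ i : ℕ, i ≤ k → ¬(ℓ (sig z t0 (j - 2*(i:ℤ) - 1)) < ℓ z)) →
    eta cs (z^((k:ℤ)+1)) (sig z t0 j) = false := by
  intro k
  induction k with
  | zero =>
    intro j hcond
    rw [show ((0:ℕ):ℤ)+1 = 1 by norm_num, rot_eta cs hconj hrefl 1 j]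
    apply decide_eq_false
    rw [zpow_one]
    have h := hcond 0 (le_refl 0)
    rwa [show j - 2*((0:ℕ):ℤ) - 1 = j - 1 by push_cast; ring] at h
  | succ k ih =>
    intro j hcond
    have hdec : z^(((k+1:ℕ):ℤ)+1) = z^(1:ℤ) * z^((k:ℤ)+1) := by
      rw [← zpow_add]
      congr 1
      push_cast
      ring
    rw [hdec, eta_zpow_mul cs hconj hrefl 1 (z^((k:ℤ)+1)) j]
    have h1 : eta cs (z^(1:ℤ)) (sig z t0 j) = false := by
      rw [rot_eta cs hconj hrefl 1 j]
      apply decide_eq_false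
      rw [zpow_one]
      have h := hcond 0 (by omega)
      rwa [show j - 2*((0:ℕ):ℤ) - 1 = j - 1 by push_cast; ring] at h
    have h2 : eta cs (z^((k:ℤ)+1)) (sig z t0 (j - 2*1)) = false := by
      apply ih
      intro i hi
      have h := hcond (i+1) (by omega)
      rwa [show j - 2*((i+1:ℕ):ℤ) - 1 = (j - 2*1) - 2*(i:ℤ) - 1 by push_cast; ring] at h
    rw [h1, h2]
    rfl

lemma eta_rot_true {z t0 : W} (hconj : t0 * z * t0 = z⁻¹)
    (hrefl : ∀ k : ℤ, cs.IsReflection (z^k * t0)) :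
    ∀ (k : ℕ) (j : ℤ) (i₀ : ℕ), i₀ ≤ k →
    (ℓ (sig z t0 (j - 2*(i₀:ℤ) - 1)) < ℓ z) →
    (∀ i : ℕ, i ≤ k → i ≠ i₀ → ¬(ℓ (sig z t0 (j - 2*(i:ℤ) - 1)) < ℓ z)) →
    eta cs (z^((k:ℤ)+1)) (sig z t0 j) = true := by
  intro k
  induction k with
  | zero =>
    intro j i₀ hi₀ hyes _hno
    have hi₀0 : i₀ = 0 := Nat.le_zero.mp hi₀
    subst hi₀0
    rw [show ((0:ℕ):ℤ)+1 = 1 by norm_num, rot_eta cs hconj hrefl 1 j]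
    apply decide_eq_true
    rw [zpow_one]
    rwa [show j - 2*((0:ℕ):ℤ) - 1 = j - 1 by push_cast; ring] at hyes
  | succ k ih =>
    intro j i₀ hi₀ hyes hno
    have hdec : z^(((k+1:ℕ):ℤ)+1) = z^(1:ℤ) * z^((k:ℤ)+1) := by
      rw [← zpow_add]
      congr 1
      push_cast
      ring
    rw [hdec, eta_zpow_mul cs hconj hrefl 1 (z^((k:ℤ)+1)) j]
    rcases Nat.eq_zero_or_pos i₀ with h0' | hpos
    · subst h0'
      have h1 : eta cs (z^(1:ℤ)) (sig z t0 j) = true := by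
        rw [rot_eta cs hconj hrefl 1 j]
        apply decide_eq_true
        rw [zpow_one]
        rwa [show j - 2*((0:ℕ):ℤ) - 1 = j - 1 by push_cast; ring] at hyes
      have h2 : eta cs (z^((k:ℤ)+1)) (sig z t0 (j - 2*1)) = false := by
        apply eta_rot_false cs hconj hrefl
        intro i hi
        have h := hno (i+1) (by omega) (by omega)
        rwa [show j - 2*((i+1:ℕ):ℤ) - 1 = (j - 2*1) - 2*(i:ℤ) - 1 by push_cast; ring] at h
      rw [h1, h2]
      rfl
    · obtain ⟨i₁, rfl⟩ := Nat.exists_eq_succ_of_ne_zero (n := i₀) (by omega)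
      have h1 : eta cs (z^(1:ℤ)) (sig z t0 j) = false := by
        rw [rot_eta cs hconj hrefl 1 j]
        apply decide_eq_false
        rw [zpow_one]
        have h := hno 0 (by omega) (by omega)
        rwa [show j - 2*((0:ℕ):ℤ) - 1 = j - 1 by push_cast; ring] at h
      have h2 : eta cs (z^((k:ℤ)+1)) (sig z t0 (j - 2*1)) = true := by
        apply ih (j - 2*1) i₁ (by omega)
        · have := hyes
          rwa [show j - 2*((i₁+1:ℕ):ℤ) - 1 = (j - 2*1) - 2*(i₁:ℤ) - 1 by push_cast; ring] at this
        · intro i hi hne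
          have h := hno (i+1) (by omega) (by omega)
          rwa [show j - 2*((i+1:ℕ):ℤ) - 1 = (j - 2*1) - 2*(i:ℤ) - 1 by push_cast; ring] at h
      rw [h1, h2]
      rfl

lemma mu_eq_one {z t0 : W} (hconj : t0 * z * t0 = z⁻¹)
    (hrefl : ∀ k : ℤ, cs.IsReflection (z^k * t0))
    (hinf : ∀ n : ℤ, n ≠ 0 → z^n ≠ 1)
    {lam : ℕ} (hminrot : ∀ m : ℤ, m ≠ 0 → lam ≤ ℓ (z^m))
    {μ : ℤ} (hμ1 : 1 ≤ μ) (hμlam : ℓ (z^μ) = lam)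
    (h0 : ℓ (sig z t0 0) < lam) (hμshort : ℓ (sig z t0 μ) < lam) : μ = 1 := by
  by_contra hne
  have hμ2 : 2 ≤ μ := by omega
  -- the finite set C₁ = {i | ℓ (sig i) < ℓ z}
  obtain ⟨ωz, hωz⟩ := cs.wordProd_surjective z
  have hsub : {i : ℤ | ℓ (sig z t0 i) < ℓ z}
      ⊆ (fun i => sig z t0 (i+1)) ⁻¹' {x | x ∈ cs.leftInvSeq ωz} := by
    intro i hi
    show sig z t0 (i+1) ∈ cs.leftInvSeq ωz
    apply mem_lis_of_eta
    rw [hωz]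
    have h := rot_eta cs hconj hrefl 1 (i+1)
    rw [zpow_one] at h
    rw [h]
    apply decide_eq_true
    rwa [show i+1-1 = i by ring]
  have hinj : Function.Injective (fun i : ℤ => sig z t0 (i+1)) := by
    intro i j hij
    have := sig_injective cs hconj hrefl hinf hij
    omega
  have hfin := Set.Finite.subset (Set.Finite.preimage hinj.injOn (List.finite_toSet _)) hsub
  have h0mem : (0:ℤ) ∈ {i : ℤ | ℓ (sig z t0 i) < ℓ z} := by
    show ℓ (sig z t0 0) < ℓ z
    calc ℓ (sig z t0 0) < lam := h0
      _ ≤ ℓ (z^(1:ℤ)) := hminrot 1 one_ne_zero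
      _ = ℓ z := by rw [zpow_one]
  have hFne : hfin.toFinset.Nonempty := ⟨0, by rw [Set.Finite.mem_toFinset]; exact h0mem⟩
  set m0 := hfin.toFinset.min' hFne with hm0def
  have hmem_iff : ∀ i : ℤ, i ∈ hfin.toFinset ↔ ℓ (sig z t0 i) < ℓ z := by
    intro i
    rw [Set.Finite.mem_toFinset]
    rfl
  have hm0mem : ℓ (sig z t0 m0) < ℓ z := (hmem_iff m0).mp (hfin.toFinset.min'_mem hFne)
  have hm0le : m0 ≤ 0 := hfin.toFinset.min'_le 0 ((hmem_iff 0).mpr h0mem)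
  have hm0min : ∀ i : ℤ, ℓ (sig z t0 i) < ℓ z → m0 ≤ i := by
    intro i hi
    exact hfin.toFinset.min'_le i ((hmem_iff i).mpr hi)
  obtain ⟨kμ, hkμ⟩ := Int.eq_ofNat_of_zero_le (show (0:ℤ) ≤ μ - 1 by omega)
  have hμeq : μ = (kμ:ℤ) + 1 := by omega
  have hfact1 : m0 + 1 = μ ∨ m0 + 1 = 2*μ := by
    have htrue : eta cs (z^μ) (sig z t0 (m0+1)) = true := by
      rw [hμeq]
      apply eta_rot_true cs hconj hrefl kμ (m0+1) 0 (by omega)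
      · rwa [show m0+1 - 2*((0:ℕ):ℤ) - 1 = m0 by push_cast; ring]
      · intro i hi hine hcon
        have hge := hm0min _ hcon
        have hi1 : 1 ≤ (i:ℤ) := by
          have : i ≠ 0 := hine
          omega
        omega
    have hs := S_z_mu cs hconj hrefl hminrot (show μ ≠ 0 by omega) h0 hμshort (m0+1)
    rw [htrue] at hs
    exact of_decide_eq_true hs.symm
  omega

lemma canonical_pair {z t0 : W} (hconj : t0 * z * t0 = z⁻¹)
    (hrefl : ∀ k : ℤ, cs.IsReflection (z^k * t0))
    (hinf : ∀ n : ℤ, n ≠ 0 → z^n ≠ 1)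
    {lam : ℕ} (hminrot : ∀ m : ℤ, m ≠ 0 → lam ≤ ℓ (z^m))
    {μ : ℤ} (hμ1 : 1 ≤ μ) (hμlam : ℓ (z^μ) = lam)
    (h0 : ℓ (sig z t0 0) < lam) (hμshort : ℓ (sig z t0 μ) < lam) :
    (∀ j : ℤ, eta cs t0 (sig z t0 j) = decide (j = 0)) ∧
    (∀ j : ℤ, eta cs (sig z t0 1) (sig z t0 j) = decide (j = 1)) := by
  have hμ := mu_eq_one cs hconj hrefl hinf hminrot hμ1 hμlam h0 hμshort
  subst hμ
  constructor
  · intro j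
    have h := canonical_of_short cs hconj hrefl hminrot 0 h0 j
    rwa [sig_zero] at h
  · intro j
    exact canonical_of_short cs hconj hrefl hminrot 1 hμshort j


lemma sig_conj_rot {z t0 : W} (hconj : t0 * z * t0 = z⁻¹)
    (hrefl : ∀ k : ℤ, cs.IsReflection (z^k * t0)) (c : ℤ) :
    (sig z t0 c) * z * (sig z t0 c) = z⁻¹ := by
  have h1 : sig z t0 c * z = sig z t0 (c-1) := by
    have h := sig_mul_zpow cs hconj hrefl c 1
    rwa [zpow_one] at h
  rw [h1, sig_mul cs hconj hrefl, show (c-1) - c = (-1:ℤ) by ring, zpow_neg_one]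

lemma sig_shift {z t0 : W} (c j : ℤ) : sig z (sig z t0 c) j = sig z t0 (j + c) := by
  unfold sig
  rw [← mul_assoc, ← zpow_add]

lemma sig_neg {z t0 : W} (j : ℤ) : sig z⁻¹ t0 j = sig z t0 (-j) := by
  unfold sig
  rw [inv_zpow, ← zpow_neg]

theorem exists_canonical_pair (ha : cs.IsReflection a) (hb : cs.IsReflection b)
    (hinf : ∀ n : ℤ, n ≠ 0 → (a*b)^n ≠ 1) :
    ∃ (z' t0' : W) (p : ℤ),
      (t0' * z' * t0' = z'⁻¹) ∧
      (∀ k : ℤ, cs.IsReflection (z'^k * t0')) ∧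
      (∀ j : ℤ, eta cs t0' (sig z' t0' j) = decide (j = 0)) ∧
      (∀ j : ℤ, eta cs (sig z' t0' 1) (sig z' t0' j) = decide (j = 1)) ∧
      ((a = sig z' t0' p ∧ b = sig z' t0' (p+1)) ∨
        (b = sig z' t0' p ∧ a = sig z' t0' (p+1))) := by
  have hconj_a : a * (a*b) * a = (a*b)⁻¹ := conj_ab cs ha hb
  have hrefl_a : ∀ k : ℤ, cs.IsReflection ((a*b)^k * a) := refl_rho cs ha hb
  have hPex : ∃ n : ℕ, ∃ m : ℤ, m ≠ 0 ∧ ℓ ((a*b)^m) = n := ⟨ℓ ((a*b)^(1:ℤ)), 1, one_ne_zero, rfl⟩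
  set lam := Nat.find hPex with hlamdef
  obtain ⟨μ₀, hμ₀ne, hμ₀lam⟩ := Nat.find_spec hPex
  have hminrot : ∀ m : ℤ, m ≠ 0 → lam ≤ ℓ ((a*b)^m) := fun m hm => Nat.find_le ⟨m, hm, rfl⟩
  -- step 1 : some reflection is shorter than lam
  have hCne : ∃ c : ℤ, ℓ (sig (a*b) a c) < lam := by
    by_contra hC
    push_neg at hC
    have hbase : ∀ j : ℤ, eta cs ((a*b)^μ₀) (sig (a*b) a j) = false := by
      intro j
      cases hx : eta cs ((a*b)^μ₀) (sig (a*b) a j)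
      · rfl
      · exfalso
        have hlen := (eta_sig_iff cs hrefl_a ((a*b)^μ₀) j).mp hx
        rw [sig_mul_zpow cs hconj_a hrefl_a, hμ₀lam] at hlen
        have := hC (j - μ₀)
        omega
    have hfalse : ∀ k : ℕ, ∀ j : ℤ, eta cs ((a*b)^(((k:ℤ)+1)*μ₀)) (sig (a*b) a j) = false := by
      intro k
      induction k with
      | zero =>
        intro j
        rw [show (((0:ℕ):ℤ)+1)*μ₀ = μ₀ by push_cast; ring]
        exact hbase j
      | succ k ih =>
        intro j
        have hdec : (a*b)^((((k+1:ℕ):ℤ)+1)*μ₀) = (a*b)^μ₀ * (a*b)^(((k:ℤ)+1)*μ₀) := by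
          rw [← zpow_add]
          congr 1
          push_cast
          ring
        rw [hdec, eta_zpow_mul cs hconj_a hrefl_a μ₀ _ j, hbase j, ih (j - 2*μ₀)]
        rfl
    have hbound : ∀ k : ℕ, ℓ (((a*b)^μ₀)^(k+1)) ≤ ℓ a := by
      intro k
      have hpow : ((a*b)^μ₀)^(k+1) = (a*b)^(((k:ℤ)+1)*μ₀) := by
        rw [← zpow_natCast ((a*b)^μ₀) (k+1), ← zpow_mul]
        congr 1
        push_cast
        ring
      have h1 := hfalse k (((k:ℤ)+1)*μ₀)
      have h2 : ¬ (ℓ (sig (a*b) a (((k:ℤ)+1)*μ₀) * (a*b)^(((k:ℤ)+1)*μ₀))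
          < ℓ ((a*b)^(((k:ℤ)+1)*μ₀))) := by
        intro hcon
        have h3 := (eta_sig_iff cs hrefl_a _ _).mpr hcon
        rw [h1] at h3
        exact absurd h3 (by decide)
      rw [sig_mul_zpow cs hconj_a hrefl_a, sub_self] at h2
      have hza : sig (a*b) a (0:ℤ) = a := by
        show (a*b)^(0:ℤ) * a = a
        rw [zpow_zero, one_mul]
      rw [hza] at h2
      rw [hpow]
      omega
    obtain ⟨k, hk0, hkgt⟩ := exists_power_length_gt cs ((a*b)^μ₀) (fun n hn => by
      intro hcon
      rw [← zpow_natCast ((a*b)^μ₀) n, ← zpow_mul] at hcon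
      refine hinf (μ₀ * (n:ℤ)) ?_ hcon
      have hn' : (n:ℤ) ≠ 0 := by exact_mod_cast hn
      exact mul_ne_zero hμ₀ne hn') (ℓ a)
    obtain ⟨k', rfl⟩ := Nat.exists_eq_succ_of_ne_zero (n := k) hk0
    rw [Nat.succ_eq_add_one] at hkgt
    have := hbound k'
    omega
  obtain ⟨c₀, hc₀⟩ := hCne
  set t0 := sig (a*b) a c₀ with ht0def
  have hconj_t0 : t0 * (a*b) * t0 = (a*b)⁻¹ := sig_conj_rot cs hconj_a hrefl_a c₀
  have hrefl_t0 : ∀ k : ℤ, cs.IsReflection ((a*b)^k * t0) := by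
    intro k
    show cs.IsReflection (sig (a*b) t0 k)
    rw [ht0def, sig_shift]
    exact hrefl_a (k + c₀)
  have h0short : ℓ (sig (a*b) t0 0) < lam := by
    rw [sig_zero]
    exact hc₀
  -- step 2 : one of ±μ₀ is a short reflection index
  have hxor : ℓ (sig (a*b) t0 μ₀) < lam ∨ ℓ (sig (a*b) t0 (-μ₀)) < lam := by
    have htrue := eta_refl_self cs (sig_refl cs hrefl_t0 (2*μ₀))
    have hexpand : sig (a*b) t0 (2*μ₀) = (a*b)^μ₀ * ((a*b)^μ₀ * (sig (a*b) t0 0)) := by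
      rw [sig_zero]
      show (a*b)^(2*μ₀) * t0 = _
      rw [← mul_assoc, ← zpow_add, two_mul]
    nth_rewrite 1 [hexpand] at htrue
    rw [eta_zpow_mul cs hconj_t0 hrefl_t0 μ₀ _ (2*μ₀)] at htrue
    rw [eta_zpow_mul cs hconj_t0 hrefl_t0 μ₀ _ (2*μ₀ - 2*μ₀)] at htrue
    rw [rot_eta cs hconj_t0 hrefl_t0 μ₀ (2*μ₀),
      rot_eta cs hconj_t0 hrefl_t0 μ₀ (2*μ₀ - 2*μ₀)] at htrue
    rw [canonical_of_short cs hconj_t0 hrefl_t0 hminrot 0 h0short (2*μ₀ - 2*μ₀ - 2*μ₀)] at htrue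
    rw [hμ₀lam] at htrue
    rw [show 2*μ₀ - μ₀ = μ₀ by ring, show 2*μ₀ - 2*μ₀ - μ₀ = -μ₀ by ring] at htrue
    rw [decide_eq_false (show ¬(2*μ₀ - 2*μ₀ - 2*μ₀ = 0) by omega)] at htrue
    by_cases h1 : ℓ (sig (a*b) t0 μ₀) < lam
    · exact Or.inl h1
    · right
      rw [decide_eq_false h1] at htrue
      by_cases h2 : ℓ (sig (a*b) t0 (-μ₀)) < lam
      · exact h2
      · rw [decide_eq_false h2] at htrue
        exact absurd htrue (by decide)
  -- common continuations
  have hconj_t0' : t0 * (a*b)⁻¹ * t0 = ((a*b)⁻¹)⁻¹ := by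
    have h1 : t0 * (a*b)⁻¹ * t0 = (t0 * (a*b) * t0)⁻¹ := by
      conv_rhs => rw [mul_inv_rev, mul_inv_rev]
      rw [(t0_refl cs hrefl_t0).inv]
      simp only [mul_assoc]
    rw [h1, hconj_t0, inv_inv]
  have hrefl_t0' : ∀ k : ℤ, cs.IsReflection (((a*b)⁻¹)^k * t0) := by
    intro k
    rw [inv_zpow, ← zpow_neg]
    exact hrefl_t0 (-k)
  have hinf' : ∀ n : ℤ, n ≠ 0 → ((a*b)⁻¹)^n ≠ 1 := by
    intro n hn hcon
    rw [inv_zpow, ← zpow_neg] at hcon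
    exact hinf (-n) (by omega) hcon
  have hminrot' : ∀ m : ℤ, m ≠ 0 → lam ≤ ℓ (((a*b)⁻¹)^m) := by
    intro m hm
    rw [inv_zpow, ← zpow_neg]
    exact hminrot (-m) (by omega)
  have h0short' : ℓ (sig (a*b)⁻¹ t0 0) < lam := by
    rw [sig_neg, neg_zero]
    exact h0short
  have haexpr : a = sig (a*b) t0 (-c₀) := by
    rw [ht0def, sig_shift, show -c₀ + c₀ = (0:ℤ) by ring]
    show a = (a*b)^(0:ℤ) * a
    rw [zpow_zero, one_mul]
  have hbexpr : b = sig (a*b) t0 (-c₀-1) := by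
    rw [ht0def, sig_shift, show -c₀-1 + c₀ = (-1:ℤ) by ring]
    exact b_eq cs ha hb
  rcases hxor with hshort | hshort
  · rcases le_or_gt 1 μ₀ with hpos | hneg
    · obtain ⟨hc0, hc1⟩ :=
        canonical_pair cs hconj_t0 hrefl_t0 hinf hminrot hpos hμ₀lam h0short hshort
      refine ⟨a*b, t0, -c₀-1, hconj_t0, hrefl_t0, hc0, hc1, Or.inr ⟨hbexpr, ?_⟩⟩
      rw [show -c₀-1+1 = -c₀ by ring]
      exact haexpr
    · have hμ'lam : ℓ (((a*b)⁻¹)^(-μ₀)) = lam := by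
        rw [inv_zpow, ← zpow_neg, neg_neg]
        exact hμ₀lam
      have hshort' : ℓ (sig (a*b)⁻¹ t0 (-μ₀)) < lam := by
        rw [sig_neg, neg_neg]
        exact hshort
      obtain ⟨hc0, hc1⟩ :=
        canonical_pair cs hconj_t0' hrefl_t0' hinf' hminrot' (by omega : 1 ≤ -μ₀) hμ'lam
          h0short' hshort'
      refine ⟨(a*b)⁻¹, t0, c₀, hconj_t0', hrefl_t0', hc0, hc1, Or.inl ⟨?_, ?_⟩⟩
      · rw [sig_neg]
        exact haexpr
      · rw [sig_neg, show -(c₀+1) = -c₀-1 by ring]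
        exact hbexpr
  · rcases le_or_gt 1 (-μ₀) with hpos | hneg
    · have hμlam' : ℓ ((a*b)^(-μ₀)) = lam := by
        rw [zpow_neg, cs.length_inv]
        exact hμ₀lam
      obtain ⟨hc0, hc1⟩ :=
        canonical_pair cs hconj_t0 hrefl_t0 hinf hminrot hpos hμlam' h0short hshort
      refine ⟨a*b, t0, -c₀-1, hconj_t0, hrefl_t0, hc0, hc1, Or.inr ⟨hbexpr, ?_⟩⟩
      rw [show -c₀-1+1 = -c₀ by ring]
      exact haexpr
    · have hμpos : 1 ≤ μ₀ := by omega
      have hμlam' : ℓ (((a*b)⁻¹)^μ₀) = lam := by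
        rw [inv_zpow, cs.length_inv]
        exact hμ₀lam
      have hshort' : ℓ (sig (a*b)⁻¹ t0 μ₀) < lam := by
        rw [sig_neg]
        exact hshort
      obtain ⟨hc0, hc1⟩ :=
        canonical_pair cs hconj_t0' hrefl_t0' hinf' hminrot' hμpos hμlam' h0short' hshort'
      refine ⟨(a*b)⁻¹, t0, c₀, hconj_t0', hrefl_t0', hc0, hc1, Or.inl ⟨?_, ?_⟩⟩
      · rw [sig_neg]
        exact haexpr
      · rw [sig_neg, show -(c₀+1) = -c₀-1 by ring]
        exact hbexpr

end Existence


section Roots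

lemma root_mem (v : W) (i : B) (w : W) :
    w ∈ (fun u => v * u) '' simpleRoot cs i ↔
      eta cs w (v * cs.simple i * v⁻¹) = eta cs v (v * cs.simple i * v⁻¹) := by
  have himg : w ∈ (fun u => v * u) '' simpleRoot cs i ↔ v⁻¹ * w ∈ simpleRoot cs i := by
    constructor
    · rintro ⟨x, hx, rfl⟩
      show v⁻¹ * (v * x) ∈ simpleRoot cs i
      rwa [← mul_assoc, inv_mul_cancel, one_mul]
    · intro hx
      refine ⟨v⁻¹ * w, hx, ?_⟩
      show v * (v⁻¹ * w) = w
      rw [← mul_assoc, mul_inv_cancel, one_mul]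
  rw [himg]
  have hsimple : v⁻¹ * w ∈ simpleRoot cs i ↔ eta cs (v⁻¹ * w) (cs.simple i) = false := by
    show ℓ (v⁻¹ * w) < ℓ (cs.simple i * (v⁻¹ * w)) ↔ _
    rw [eta_false_iff cs (cs.isReflection_simple i)]
  rw [hsimple]
  have hco := eta_cocycle cs v (v⁻¹ * w) (v * cs.simple i * v⁻¹)
  rw [show v * (v⁻¹ * w) = w by group] at hco
  rw [show v⁻¹ * (v * cs.simple i * v⁻¹) * v = cs.simple i by group] at hco
  rw [hco]
  cases (eta cs v (v * cs.simple i * v⁻¹)) <;> cases (eta cs (v⁻¹*w) (cs.simple i)) <;> simp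

lemma swap_refl_eq {α : Set W} {t r : W} {c : Bool}
    (hmem : ∀ w, w ∈ α ↔ eta cs w t = c)
    (hr : cs.IsReflection r)
    (hswap : (fun w => r * w) '' α = αᶜ) : r = t := by
  have h1 : ∀ w, w ∈ α → (r * w) ∉ α := by
    intro w hw hcon
    have : r * w ∈ αᶜ := by
      rw [← hswap]
      exact ⟨w, hw, rfl⟩
    exact this hcon
  have h2 : ∀ w, w ∉ α → (r * w) ∈ α := by
    intro w hw
    have hwc : w ∈ αᶜ := hw
    rw [← hswap] at hwc
    obtain ⟨x, hx, hxe⟩ := hwc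
    have hxw : r * w = x := by
      simp only at hxe
      rw [← hxe, ← mul_assoc, hr.mul_self, one_mul]
    rwa [hxw]
  obtain ⟨v, i, hvi⟩ := hr
  have hrr : r * r = 1 := by
    rw [hvi]
    have : v * cs.simple i * v⁻¹ * (v * cs.simple i * v⁻¹)
        = v * (cs.simple i * cs.simple i) * v⁻¹ := by group
    rw [this, cs.simple_mul_simple_self, mul_one, mul_inv_cancel]
  by_cases hv : v ∈ α
  · have hrv : r * v ∉ α := h1 v hv
    have hre : r * v = v * cs.simple i := by rw [hvi]; group
    have he1 : eta cs v t = c := (hmem v).mp hv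
    have he2 : ¬ (eta cs (v * cs.simple i) t = c) := by
      intro hcon
      exact hrv (by rw [hre]; exact (hmem _).mpr hcon)
    have hco := eta_cocycle cs v (cs.simple i) t
    have he3 : eta cs (cs.simple i) (v⁻¹ * t * v) = true := by
      cases hx : eta cs (cs.simple i) (v⁻¹ * t * v)
      · exfalso
        apply he2
        rw [hco, hx, he1]
        cases c <;> rfl
      · rfl
    rw [eta_simple] at he3
    have heq := of_decide_eq_true he3
    rw [hvi, ← heq]
    group
  · have hrv : r * v ∈ α := h2 v hv
    have hre : (r * v) * cs.simple i = v := by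
      have hstep : (v * cs.simple i * v⁻¹) * v * cs.simple i
          = v * (cs.simple i * cs.simple i) := by group
      rw [hvi, hstep, cs.simple_mul_simple_self, mul_one]
    have he1 : eta cs (r*v) t = c := (hmem _).mp hrv
    have he2 : ¬ (eta cs ((r*v) * cs.simple i) t = c) := by
      intro hcon
      apply hv
      have := (hmem _).mpr hcon
      rwa [hre] at this
    have hco := eta_cocycle cs (r*v) (cs.simple i) t
    have he3 : eta cs (cs.simple i) ((r*v)⁻¹ * t * (r*v)) = true := by
      cases hx : eta cs (cs.simple i) ((r*v)⁻¹ * t * (r*v))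
      · exfalso
        apply he2
        rw [hco, hx, he1]
        cases c <;> rfl
      · rfl
    rw [eta_simple] at he3
    have heq := of_decide_eq_true he3
    have ht : t = (r*v) * cs.simple i * (r*v)⁻¹ := by
      rw [← heq]
      group
    have h4 : (r*v) * cs.simple i * (r*v)⁻¹ = r * (v * cs.simple i * v⁻¹) * r⁻¹ := by group
    rw [ht, h4, ← hvi]
    rw [show r * r * r⁻¹ = (r * r) * r⁻¹ from rfl, hrr, one_mul]
    exact (inv_eq_of_mul_eq_one_right hrr).symm

end Roots

end

end CoxPrenil

/-- If `{α, β}` is a prenilpotent pair of distinct roots and the product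
`r_α r_β` of the associated reflections has infinite order, then `α ⊊ β` or `β ⊊ α`. -/
theorem prenilpotent_infinite_order_nested (cs : CoxeterSystem M W) {α β : Set W}
    (hα : IsRoot cs α) (hβ : IsRoot cs β) (hne : α ≠ β)
    (hpre₁ : (α ∩ β).Nonempty) (hpre₂ : (αᶜ ∩ βᶜ).Nonempty)
    {rα rβ : W} (hrα : cs.IsReflection rα) (hrβ : cs.IsReflection rβ)
    (hswapα : (fun w => rα * w) '' α = αᶜ) (hswapβ : (fun w => rβ * w) '' β = βᶜ)
    (hord : orderOf (rα * rβ) = 0) :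
    α ⊂ β ∨ β ⊂ α := by
  classical
  by_contra hcon
  rw [not_or] at hcon
  obtain ⟨h1, h2⟩ := hcon
  have hns1 : ¬ (α ⊆ β) := fun hsub => h1 (ssubset_iff_subset_ne.mpr ⟨hsub, hne⟩)
  have hns2 : ¬ (β ⊆ α) := fun hsub => h2 (ssubset_iff_subset_ne.mpr ⟨hsub, hne.symm⟩)
  obtain ⟨x, hxα, hxβ⟩ := Set.not_subset.mp hns1
  obtain ⟨y, hyβ, hyα⟩ := Set.not_subset.mp hns2
  obtain ⟨pq, hpq⟩ := hpre₁
  obtain ⟨q, hq⟩ := hpre₂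
  have hpα : pq ∈ α := hpq.1
  have hpβ : pq ∈ β := hpq.2
  have hqα : q ∉ α := hq.1
  have hqβ : q ∉ β := hq.2
  -- root data
  obtain ⟨v1, i1, hα1⟩ := hα
  obtain ⟨v2, i2, hβ1⟩ := hβ
  set c1 := CoxPrenil.eta cs v1 (v1 * cs.simple i1 * v1⁻¹) with hc1def
  set c2 := CoxPrenil.eta cs v2 (v2 * cs.simple i2 * v2⁻¹) with hc2def
  have hmemα : ∀ w, w ∈ α ↔ CoxPrenil.eta cs w (v1 * cs.simple i1 * v1⁻¹) = c1 := by
    intro w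
    rw [hα1]
    exact CoxPrenil.root_mem cs v1 i1 w
  have hmemβ : ∀ w, w ∈ β ↔ CoxPrenil.eta cs w (v2 * cs.simple i2 * v2⁻¹) = c2 := by
    intro w
    rw [hβ1]
    exact CoxPrenil.root_mem cs v2 i2 w
  have hid1 : rα = v1 * cs.simple i1 * v1⁻¹ :=
    CoxPrenil.swap_refl_eq cs hmemα hrα hswapα
  have hid2 : rβ = v2 * cs.simple i2 * v2⁻¹ :=
    CoxPrenil.swap_refl_eq cs hmemβ hrβ hswapβ
  rw [← hid1] at hmemα
  rw [← hid2] at hmemβ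
  -- infinite order
  have hord' := orderOf_eq_zero_iff'.mp hord
  have hinfz : ∀ n : ℤ, n ≠ 0 → (rα * rβ)^n ≠ 1 := by
    intro n hn hconp
    rcases lt_trichotomy n 0 with hneg | hzero | hpos
    · have hpos' : (0:ℤ) < -n := by omega
      obtain ⟨k, hk⟩ := Int.eq_ofNat_of_zero_le hpos'.le
      apply hord' k (by omega)
      have : (rα * rβ)^(-n) = 1 := by rw [zpow_neg, hconp, inv_one]
      rw [hk] at this
      rwa [zpow_natCast] at this
    · exact hn hzero
    · obtain ⟨k, hk⟩ := Int.eq_ofNat_of_zero_le hpos.le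
      apply hord' k (by omega)
      rw [hk] at hconp
      rwa [zpow_natCast] at hconp
  -- all four boolean patterns are realized
  have hnec : ∀ (bb cc : Bool), bb ≠ cc → bb = !cc := by decide
  have hall : ∀ (d1 d2 : Bool), ∃ w, CoxPrenil.eta cs w rα = d1 ∧ CoxPrenil.eta cs w rβ = d2 := by
    intro d1 d2
    by_cases e1 : d1 = c1 <;> by_cases e2 : d2 = c2
    · exact ⟨pq, by rw [e1]; exact (hmemα pq).mp hpα, by rw [e2]; exact (hmemβ pq).mp hpβ⟩
    · refine ⟨x, by rw [e1]; exact (hmemα x).mp hxα, ?_⟩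
      have hx2 : ¬ (CoxPrenil.eta cs x rβ = c2) := fun hcc => hxβ ((hmemβ x).mpr hcc)
      rw [hnec _ _ hx2, hnec _ _ e2]
    · refine ⟨y, ?_, by rw [e2]; exact (hmemβ y).mp hyβ⟩
      have hy1 : ¬ (CoxPrenil.eta cs y rα = c1) := fun hcc => hyα ((hmemα y).mpr hcc)
      rw [hnec _ _ hy1, hnec _ _ e1]
    · refine ⟨q, ?_, ?_⟩
      · have hq1 : ¬ (CoxPrenil.eta cs q rα = c1) := fun hcc => hqα ((hmemα q).mpr hcc)
        rw [hnec _ _ hq1, hnec _ _ e1]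
      · have hq2 : ¬ (CoxPrenil.eta cs q rβ = c2) := fun hcc => hqβ ((hmemβ q).mpr hcc)
        rw [hnec _ _ hq2, hnec _ _ e2]
  -- canonical dihedral pair
  obtain ⟨z', t0', p, hco, hre, hcan0, hcan1, hab⟩ :=
    CoxPrenil.exists_canonical_pair cs hrα hrβ hinfz
  rcases hab with ⟨hA, hB⟩ | ⟨hB, hA⟩
  · obtain ⟨w1, hw1a, hw1b⟩ := hall true true
    obtain ⟨w2, hw2a, hw2b⟩ := hall true false
    obtain ⟨w3, hw3a, hw3b⟩ := hall false true
    refine CoxPrenil.no_four cs hco hre hcan0 hcan1 p w1 w2 w3 ?_ ?_ ?_ ?_ ?_ ?_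
    · rw [← hA]; exact hw1a
    · rw [← hB]; exact hw1b
    · rw [← hA]; exact hw2a
    · rw [← hB]; exact hw2b
    · rw [← hA]; exact hw3a
    · rw [← hB]; exact hw3b
  · obtain ⟨w1, hw1a, hw1b⟩ := hall true true
    obtain ⟨w2, hw2a, hw2b⟩ := hall false true
    obtain ⟨w3, hw3a, hw3b⟩ := hall true false
    refine CoxPrenil.no_four cs hco hre hcan0 hcan1 p w1 w2 w3 ?_ ?_ ?_ ?_ ?_ ?_
    · rw [← hB]; exact hw1b
    · rw [← hA]; exact hw1a
    · rw [← hB]; exact hw2b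
    · rw [← hA]; exact hw2a
    · rw [← hB]; exact hw3b
    · rw [← hA]; exact hw3a
end

section
/- Let G be a group and U_1, …, U_k subgroups of G such that for all 1 ≤ i < j ≤ k one has [U_i, U_j] ≤ ⟨U_{i+1}, …, U_{j−1}⟩ (the trivial group when j = i+1). Then ⟨U_1, …, U_k⟩ equals the product set U_1 U_2 ⋯ U_k; if moreover each U_i is nilpotent, then this subgroup is nilpotent. -/
open Subgroup
open scoped commutatorElement

section AuxLemmas

variable {G : Type*} [Group G]

/-- If `⁅A, U i⁆ ≤ M` and `U i ≤ M` for all `i`, then `⁅A, ⨆ i, U i⁆ ≤ M`. -/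
lemma aux_commutator_iSup_le {ι : Sort*} (A : Subgroup G) (U : ι → Subgroup G) (M : Subgroup G)
    (hU : ∀ i, U i ≤ M) (h : ∀ i, ⁅A, U i⁆ ≤ M) : ⁅A, ⨆ i, U i⁆ ≤ M := by
  rw [Subgroup.commutator_le]
  intro a ha x hx
  refine (Subgroup.iSup_induction U (C := fun x => x ∈ M ∧ ∀ a ∈ A, ⁅a, x⁆ ∈ M) hx
    ?_ ?_ ?_).2 a ha
  · exact fun i x hx => ⟨hU i hx, fun a ha => h i (commutator_mem_commutator ha hx)⟩
  · exact ⟨one_mem _, fun a _ => by simpa using one_mem M⟩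
  · rintro x y ⟨hxM, hax⟩ ⟨hyM, hay⟩
    refine ⟨mul_mem hxM hyM, fun a ha => ?_⟩
    have hid : ⁅a, x * y⁆ = ⁅a, x⁆ * (x * ⁅a, y⁆ * x⁻¹) := by group
    rw [hid]
    exact mul_mem (hax a ha) (mul_mem (mul_mem hxM (hay a ha)) (inv_mem hxM))

/-- If `⁅A, M⁆ ≤ M` then `A` normalizes `M`. -/
lemma aux_le_normalizer (A M : Subgroup G) (h : ⁅A, M⁆ ≤ M) : A ≤ Subgroup.normalizer (M : Set G) := by
  intro a ha
  rw [Subgroup.mem_normalizer_iff]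
  intro m
  constructor
  · intro hm
    have h1 : a * m * a⁻¹ = m * ⁅m⁻¹, a⁆ := by group
    rw [h1]
    exact mul_mem hm (h ((Subgroup.commutator_comm A M) ▸
      commutator_mem_commutator (inv_mem hm) ha))
  · intro hm
    have h1 : m = (a * m * a⁻¹) * ⁅(a * m * a⁻¹)⁻¹, a⁻¹⁆ := by group
    rw [h1]
    exact mul_mem hm (h ((Subgroup.commutator_comm A M) ▸
      commutator_mem_commutator (inv_mem hm) (inv_mem ha)))

/-- Elements of `A ⊔ M` decompose as products when `A` normalizes `M`. -/
lemma aux_mem_sup_decomp {A M : Subgroup G} (hA : A ≤ Subgroup.normalizer (M : Set G)) {g : G}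
    (hg : g ∈ A ⊔ M) : ∃ a ∈ A, ∃ m ∈ M, g = a * m := by
  have he : A ⊔ M = ⨆ b : Bool, (bif b then A else M) := by rw [iSup_bool_eq]; rfl
  rw [he] at hg
  refine Subgroup.iSup_induction _ (C := fun g => ∃ a ∈ A, ∃ m ∈ M, g = a * m) hg ?_ ?_ ?_
  · rintro (_|_) x hx
    · exact ⟨1, one_mem _, x, hx, by simp⟩
    · exact ⟨x, hx, 1, one_mem _, by simp⟩
  · exact ⟨1, one_mem _, 1, one_mem _, by simp⟩
  · rintro x y ⟨a1, ha1, m1, hm1, rfl⟩ ⟨a2, ha2, m2, hm2, rfl⟩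
    refine ⟨a1 * a2, mul_mem ha1 ha2, (a2⁻¹ * m1 * a2) * m2, mul_mem ?_ hm2, by group⟩
    exact ((Subgroup.mem_normalizer_iff'').mp (hA ha2) m1).mp hm1

end AuxLemmas

section Fitting

variable {G : Type*} [Group G]

lemma aux_commutator_iSup_left_le {ι : Sort*} (S : ι → Subgroup G) (T M : Subgroup G)
    (hM : M.Normal) (h : ∀ i, ⁅S i, T⁆ ≤ M) : ⁅⨆ i, S i, T⁆ ≤ M := by
  rw [Subgroup.commutator_le]
  intro x hx t ht
  refine Subgroup.iSup_induction S (C := fun x => ∀ t ∈ T, ⁅x, t⁆ ∈ M) hx ?_ ?_ ?_ t ht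
  · exact fun i x hx t ht => h i (commutator_mem_commutator hx ht)
  · intro t _; simpa using one_mem M
  · intro x y hx hy t ht
    have hid : ⁅x * y, t⁆ = x * ⁅y, t⁆ * x⁻¹ * ⁅x, t⁆ := by group
    rw [hid]
    exact mul_mem (hM.conj_mem _ (hy t ht) x) (hx t ht)

lemma aux_commutator_sup_left_le {H K L M : Subgroup G} (hM : M.Normal)
    (h1 : ⁅H, L⁆ ≤ M) (h2 : ⁅K, L⁆ ≤ M) : ⁅H ⊔ K, L⁆ ≤ M := by
  have he : H ⊔ K = ⨆ b : Bool, (bif b then H else K) := by rw [iSup_bool_eq]; rfl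
  rw [he]
  exact aux_commutator_iSup_left_le _ _ _ hM (by rintro (_|_) <;> assumption)

lemma aux_normal_inf {H K : Subgroup G} (h1 : H.Normal) (h2 : K.Normal) : (H ⊓ K).Normal :=
  ⟨fun n hn g => ⟨h1.conj_mem _ hn.1 g, h2.conj_mem _ hn.2 g⟩⟩

lemma aux_normal_iSup {ι : Sort*} (S : ι → Subgroup G) (h : ∀ i, (S i).Normal) :
    (⨆ i, S i).Normal := by
  constructor
  intro n hn g
  refine Subgroup.iSup_induction S (C := fun n => ∀ g : G, g * n * g⁻¹ ∈ ⨆ i, S i) hn ?_ ?_ ?_ g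
  · exact fun i x hx g => Subgroup.mem_iSup_of_mem i ((h i).conj_mem _ hx g)
  · intro g; simpa using one_mem _
  · intro x y hx hy g
    have hid : g * (x * y) * g⁻¹ = (g * x * g⁻¹) * (g * y * g⁻¹) := by group
    rw [hid]; exact mul_mem (hx g) (hy g)

/-- Fitting's theorem: the join of two normal nilpotent subgroups is nilpotent. -/
lemma aux_fitting {A B : Subgroup G} (hAn : A.Normal) (hBn : B.Normal)
    (hsup : A ⊔ B = ⊤) (hA : Group.IsNilpotent A) (hB : Group.IsNilpotent B) :
    Group.IsNilpotent G := by
  classical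
  let A' : ℕ → Subgroup G := fun i =>
    Nat.rec ⊤ (fun i _ => (Subgroup.lowerCentralSeries (⊤ : Subgroup ↥A) i).map A.subtype) i
  let B' : ℕ → Subgroup G := fun j =>
    Nat.rec ⊤ (fun j _ => (Subgroup.lowerCentralSeries (⊤ : Subgroup ↥B) j).map B.subtype) j
  have hA'succ : ∀ i, A' (i + 1) = (Subgroup.lowerCentralSeries (⊤ : Subgroup ↥A) i).map A.subtype := fun _ => rfl
  have hB'succ : ∀ j, B' (j + 1) = (Subgroup.lowerCentralSeries (⊤ : Subgroup ↥B) j).map B.subtype := fun _ => rfl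
  have hA'one : A' 1 = A := by
    rw [show A' 1 = (Subgroup.lowerCentralSeries (⊤ : Subgroup ↥A) 0).map A.subtype from hA'succ 0,
      Subgroup.lowerCentralSeries_zero, ← MonoidHom.range_eq_map, Subgroup.range_subtype]
  have hB'one : B' 1 = B := by
    rw [show B' 1 = (Subgroup.lowerCentralSeries (⊤ : Subgroup ↥B) 0).map B.subtype from hB'succ 0,
      Subgroup.lowerCentralSeries_zero, ← MonoidHom.range_eq_map, Subgroup.range_subtype]
  have hA'step : ∀ i, A' (i + 2) = ⁅A' (i + 1), A⁆ := by
    intro i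
    have h1 : Subgroup.lowerCentralSeries (⊤ : Subgroup ↥A) (i + 1) = ⁅Subgroup.lowerCentralSeries (⊤ : Subgroup ↥A) i, ⊤⁆ := rfl
    rw [hA'succ, hA'succ, h1, Subgroup.map_commutator, ← MonoidHom.range_eq_map,
      Subgroup.range_subtype]
  have hB'step : ∀ j, B' (j + 2) = ⁅B' (j + 1), B⁆ := by
    intro j
    have h1 : Subgroup.lowerCentralSeries (⊤ : Subgroup ↥B) (j + 1) = ⁅Subgroup.lowerCentralSeries (⊤ : Subgroup ↥B) j, ⊤⁆ := rfl
    rw [hB'succ, hB'succ, h1, Subgroup.map_commutator, ← MonoidHom.range_eq_map,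
      Subgroup.range_subtype]
  have hA'normal : ∀ i, (A' i).Normal := by
    have hs : ∀ i, (A' (i + 1)).Normal := by
      intro i
      induction i with
      | zero => show (A' 1).Normal; rw [hA'one]; exact hAn
      | succ i ih => rw [hA'step i]; exact @Subgroup.commutator_normal _ _ _ _ ih hAn
    intro i
    cases i with
    | zero => exact ⟨fun n _ g => Subgroup.mem_top _⟩
    | succ i => exact hs i
  have hB'normal : ∀ j, (B' j).Normal := by
    have hs : ∀ j, (B' (j + 1)).Normal := by
      intro j
      induction j with
      | zero => show (B' 1).Normal; rw [hB'one]; exact hBn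
      | succ j ih => rw [hB'step j]; exact @Subgroup.commutator_normal _ _ _ _ ih hBn
    intro j
    cases j with
    | zero => exact ⟨fun n _ g => Subgroup.mem_top _⟩
    | succ j => exact hs j
  have hstepA : ∀ i, ⁅A' i, A⁆ ≤ A' (i + 1) := by
    intro i
    cases i with
    | zero =>
      show ⁅A' 0, A⁆ ≤ A' 1
      rw [hA'one]; exact @Subgroup.commutator_le_right _ _ _ _ hAn
    | succ i => rw [hA'step i]
  have hstepB : ∀ j, ⁅B' j, B⁆ ≤ B' (j + 1) := by
    intro j
    cases j with
    | zero =>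
      show ⁅B' 0, B⁆ ≤ B' 1
      rw [hB'one]; exact @Subgroup.commutator_le_right _ _ _ _ hBn
    | succ j => rw [hB'step j]
  have hkeepA : ∀ i, ⁅A' i, B⁆ ≤ A' i := fun i =>
    @Subgroup.commutator_le_left _ _ _ _ (hA'normal i)
  have hkeepB : ∀ j, ⁅B' j, A⁆ ≤ B' j := fun j =>
    @Subgroup.commutator_le_left _ _ _ _ (hB'normal j)
  -- the bounding series
  let R : ℕ → Subgroup G := fun n =>
    ⨆ p : ℕ × ℕ, ⨆ _ : p.1 + p.2 = n + 1, A' p.1 ⊓ B' p.2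
  have hRnormal : ∀ n, (R n).Normal := by
    intro n
    refine aux_normal_iSup _ fun p => aux_normal_iSup _ fun _ =>
      aux_normal_inf (hA'normal p.1) (hB'normal p.2)
  have hRle : ∀ n i j, i + j = n + 1 → A' i ⊓ B' j ≤ R n := by
    intro n i j hij
    exact le_iSup_of_le (i, j) (le_iSup_of_le hij le_rfl)
  have key : ∀ n, Subgroup.lowerCentralSeries (⊤ : Subgroup G) n ≤ R n := by
    intro n
    induction n with
    | zero =>
      rw [Subgroup.lowerCentralSeries_zero, ← hsup]
      refine sup_le ?_ ?_
      · exact le_trans (le_inf (le_of_eq hA'one.symm) le_top) (hRle 0 1 0 rfl)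
      · exact le_trans (le_inf le_top (le_of_eq hB'one.symm)) (hRle 0 0 1 rfl)
    | succ n ih =>
      have h1 : Subgroup.lowerCentralSeries (⊤ : Subgroup G) (n + 1) = ⁅Subgroup.lowerCentralSeries (⊤ : Subgroup G) n, ⊤⁆ := rfl
      rw [h1]
      refine le_trans (Subgroup.commutator_mono ih le_rfl) ?_
      refine aux_commutator_iSup_left_le _ _ _ (hRnormal (n + 1)) fun p => ?_
      refine aux_commutator_iSup_left_le _ _ _ (hRnormal (n + 1)) fun hp => ?_
      have htop : (⊤ : Subgroup G) = A ⊔ B := hsup.symm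
      rw [Subgroup.commutator_comm, htop]
      refine aux_commutator_sup_left_le (hRnormal (n + 1)) ?_ ?_
      · rw [Subgroup.commutator_comm]
        refine le_trans (le_inf ?_ ?_) (hRle (n + 1) (p.1 + 1) p.2 (by omega))
        · exact le_trans (Subgroup.commutator_mono inf_le_left le_rfl) (hstepA p.1)
        · exact le_trans (Subgroup.commutator_mono inf_le_right le_rfl) (hkeepB p.2)
      · rw [Subgroup.commutator_comm]
        refine le_trans (le_inf ?_ ?_) (hRle (n + 1) p.1 (p.2 + 1) (by omega))
        · exact le_trans (Subgroup.commutator_mono inf_le_left le_rfl) (hkeepA p.1)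
        · exact le_trans (Subgroup.commutator_mono inf_le_right le_rfl) (hstepB p.2)
  obtain ⟨c, hc⟩ := Subgroup.nilpotent_iff_lowerCentralSeries.mp hA
  obtain ⟨d, hd⟩ := Subgroup.nilpotent_iff_lowerCentralSeries.mp hB
  rw [Subgroup.nilpotent_iff_lowerCentralSeries]
  refine ⟨c + d, le_bot_iff.mp (le_trans (key (c + d)) ?_)⟩
  refine iSup_le fun p => iSup_le fun hp => ?_
  obtain ⟨i, j⟩ := p
  simp only at hp ⊢
  rcases (by omega : c + 1 ≤ i ∨ d + 1 ≤ j) with h | h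
  · refine le_trans inf_le_left ?_
    obtain ⟨m, rfl⟩ : ∃ m, i = m + 1 := ⟨i - 1, by omega⟩
    rw [hA'succ]
    have : Subgroup.lowerCentralSeries (⊤ : Subgroup ↥A) m = ⊥ :=
      le_bot_iff.mp (hc ▸ Subgroup.lowerCentralSeries_antitone _ (by omega : c ≤ m))
    rw [this, Subgroup.map_bot]
  · refine le_trans inf_le_right ?_
    obtain ⟨m, rfl⟩ : ∃ m, j = m + 1 := ⟨j - 1, by omega⟩
    rw [hB'succ]
    have : Subgroup.lowerCentralSeries (⊤ : Subgroup ↥B) m = ⊥ :=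
      le_bot_iff.mp (hd ▸ Subgroup.lowerCentralSeries_antitone _ (by omega : d ≤ m))
    rw [this, Subgroup.map_bot]

end Fitting

section MainInduction

variable {G : Type*} [Group G]

/-- The key structure theorem, proved by induction on `k`. -/
theorem aux_main (k : ℕ) (U : Fin k → Subgroup G)
    (hcomm : ∀ i j : Fin k, i < j → ⁅U i, U j⁆ ≤ ⨆ l ∈ Set.Ioo i j, U l) :
    (∀ g : G, g ∈ (⨆ i, U i) ↔
      ∃ u : Fin k → G, (∀ i, u i ∈ U i) ∧ g = (List.ofFn u).prod) ∧
    ((∀ i, Group.IsNilpotent (U i)) → Group.IsNilpotent (⨆ i, U i : Subgroup G)) := by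
  induction k with
  | zero =>
    constructor
    · intro g
      rw [iSup_of_empty]
      constructor
      · intro hg
        exact ⟨fun i => i.elim0, fun i => i.elim0, by simpa using (Subgroup.mem_bot.mp hg)⟩
      · rintro ⟨u, hu, rfl⟩
        simp [Subgroup.mem_bot]
    · intro _
      rw [iSup_of_empty]
      infer_instance
  | succ k IH =>
    -- the "tail" subgroups
    have hcs : ∀ i j : Fin k, i < j →
        ⁅U i.succ, U j.succ⁆ ≤ ⨆ l ∈ Set.Ioo i j, U l.succ := by
      intro i j hij
      refine le_trans (hcomm i.succ j.succ (Fin.succ_lt_succ_iff.mpr hij)) ?_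
      refine iSup₂_le fun l hl => ?_
      rw [Set.mem_Ioo] at hl
      have hl0 : l ≠ 0 := Fin.pos_iff_ne_zero.mp ((Fin.succ_pos i).trans hl.1)
      obtain ⟨m, rfl⟩ := Fin.exists_succ_eq_of_ne_zero hl0
      have hm : m ∈ Set.Ioo i j :=
        ⟨Fin.succ_lt_succ_iff.mp hl.1, Fin.succ_lt_succ_iff.mp hl.2⟩
      exact le_iSup₂_of_le m hm le_rfl
    set M : Subgroup G := ⨆ i : Fin k, U i.succ with hMdef
    have hUM : ∀ i : Fin k, U i.succ ≤ M := fun i => le_iSup (fun i : Fin k => U i.succ) i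
    have hIoo0 : ∀ t : Fin (k + 1), (⨆ l ∈ Set.Ioo (0 : Fin (k + 1)) t, U l) ≤ M := by
      intro t
      refine iSup₂_le fun l hl => ?_
      rw [Set.mem_Ioo] at hl
      obtain ⟨m, rfl⟩ := Fin.exists_succ_eq_of_ne_zero (Fin.pos_iff_ne_zero.mp hl.1)
      exact hUM m
    have h0M : ⁅U 0, M⁆ ≤ M := by
      refine aux_commutator_iSup_le _ _ _ hUM fun i => ?_
      exact le_trans (hcomm 0 i.succ (Fin.succ_pos i)) (hIoo0 i.succ)
    have hnorm : U 0 ≤ Subgroup.normalizer (M : Set G) := aux_le_normalizer _ _ h0M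
    have hsupeq : (⨆ i, U i) = U 0 ⊔ M := by
      refine le_antisymm (iSup_le fun i => ?_) (sup_le (le_iSup U 0) ?_)
      · by_cases h0 : i = 0
        · subst h0; exact le_sup_left
        · obtain ⟨m, rfl⟩ := Fin.exists_succ_eq_of_ne_zero h0
          exact le_trans (hUM m) le_sup_right
      · exact iSup_le fun i => le_iSup U i.succ
    constructor
    · intro g
      constructor
      · intro hg
        rw [hsupeq] at hg
        obtain ⟨a, ha, m, hm, rfl⟩ := aux_mem_sup_decomp hnorm hg
        obtain ⟨u', hu', hprod⟩ := ((IH _ hcs).1 m).mp hm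
        refine ⟨Fin.cons a u', ?_, ?_⟩
        · intro i
          refine Fin.cases ?_ ?_ i
          · simpa [Fin.cons_zero] using ha
          · intro m'; simpa [Fin.cons_succ] using hu' m'
        · have he : (fun i : Fin k => (Fin.cons a u' : Fin (k + 1) → G) i.succ) = u' :=
            funext fun i => by simp
          rw [List.ofFn_succ, he, List.prod_cons, Fin.cons_zero, ← hprod]
      · rintro ⟨u, hu, rfl⟩
        refine Subgroup.list_prod_mem _ fun x hx => ?_
        obtain ⟨i, rfl⟩ := List.mem_ofFn.mp hx
        exact Subgroup.mem_iSup_of_mem i (hu i)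
    · intro hnil
      by_cases hk0 : k = 0
      · subst hk0
        have he : (⨆ i, U i) = U 0 := by
          refine le_antisymm (iSup_le fun i => ?_) (le_iSup U 0)
          have hi := i.isLt
          have : i = 0 := Fin.ext (by omega)
          rw [this]
        rw [he]
        exact hnil 0
      · obtain ⟨k', rfl⟩ := Nat.exists_eq_succ_of_ne_zero hk0
        -- head subgroups
        have hcc : ∀ i j : Fin (k' + 1), i < j →
            ⁅U i.castSucc, U j.castSucc⁆ ≤ ⨆ l ∈ Set.Ioo i j, U l.castSucc := by
          intro i j hij
          refine le_trans (hcomm i.castSucc j.castSucc (Fin.castSucc_lt_castSucc_iff.mpr hij)) ?_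
          refine iSup₂_le fun l hl => ?_
          rw [Set.mem_Ioo] at hl
          have hll : l ≠ Fin.last (k' + 1) :=
            ne_of_lt (lt_of_lt_of_le hl.2 (Fin.le_last _))
          obtain ⟨m, rfl⟩ := Fin.eq_castSucc_of_ne_last hll
          have hm : m ∈ Set.Ioo i j :=
            ⟨Fin.castSucc_lt_castSucc_iff.mp hl.1, Fin.castSucc_lt_castSucc_iff.mp hl.2⟩
          exact le_iSup₂_of_le m hm le_rfl
        set A : Subgroup G := ⨆ i : Fin (k' + 1), U i.castSucc with hAdef
        have hUA : ∀ i : Fin (k' + 1), U i.castSucc ≤ A :=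
          fun i => le_iSup (fun i : Fin (k' + 1) => U i.castSucc) i
        have hIooLast : ∀ t : Fin (k' + 2),
            (⨆ l ∈ Set.Ioo t (Fin.last (k' + 1)), U l) ≤ A := by
          intro t
          refine iSup₂_le fun l hl => ?_
          rw [Set.mem_Ioo] at hl
          obtain ⟨m, rfl⟩ := Fin.eq_castSucc_of_ne_last (ne_of_lt hl.2)
          exact hUA m
        have hlastA : ⁅U (Fin.last (k' + 1)), A⁆ ≤ A := by
          refine aux_commutator_iSup_le _ _ _ hUA fun m => ?_
          rw [Subgroup.commutator_comm]
          exact le_trans (hcomm m.castSucc (Fin.last (k' + 1)) (Fin.castSucc_lt_last m))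
            (hIooLast m.castSucc)
        have hAnorm : ∀ i : Fin (k' + 2), U i ≤ Subgroup.normalizer (A : Set G) := by
          intro i
          by_cases hl : i = Fin.last (k' + 1)
          · subst hl; exact aux_le_normalizer _ _ hlastA
          · obtain ⟨m, rfl⟩ := Fin.eq_castSucc_of_ne_last hl
            exact le_trans (hUA m) Subgroup.le_normalizer
        have hBnorm : ∀ i : Fin (k' + 2), U i ≤ Subgroup.normalizer (M : Set G) := by
          intro i
          by_cases h0 : i = 0
          · subst h0; exact hnorm
          · obtain ⟨m, rfl⟩ := Fin.exists_succ_eq_of_ne_zero h0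
            exact le_trans (hUM m) Subgroup.le_normalizer
        have hAH : A ≤ ⨆ i, U i := iSup_le fun i => le_iSup U i.castSucc
        have hBH : M ≤ ⨆ i, U i := iSup_le fun i => le_iSup U i.succ
        have hHA : (⨆ i, U i) ≤ Subgroup.normalizer (A : Set G) := iSup_le hAnorm
        have hHB : (⨆ i, U i) ≤ Subgroup.normalizer (M : Set G) := iSup_le hBnorm
        have hcover : A ⊔ M = ⨆ i, U i := by
          refine le_antisymm (sup_le hAH hBH) (iSup_le fun i => ?_)
          by_cases h0 : i = 0
          · subst h0
            refine le_trans ?_ le_sup_left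
            have : (0 : Fin (k' + 2)) = (0 : Fin (k' + 1)).castSucc := by simp
            rw [this]
            exact hUA 0
          · obtain ⟨m, rfl⟩ := Fin.exists_succ_eq_of_ne_zero h0
            exact le_trans (hUM m) le_sup_right
        -- move into the subgroup ⨆ i, U i
        set H : Subgroup G := ⨆ i, U i with hHdef
        have hA1n : (A.subgroupOf H).Normal := by
          constructor
          intro n hn g
          rw [Subgroup.mem_subgroupOf] at hn ⊢
          have : ((g * n * g⁻¹ : H) : G) = (g : G) * (n : G) * (g : G)⁻¹ := by push_cast; ring_nf
          rw [this]
          exact (Subgroup.mem_normalizer_iff.mp (hHA g.2) (n : G)).mp hn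
        have hB1n : (M.subgroupOf H).Normal := by
          constructor
          intro n hn g
          rw [Subgroup.mem_subgroupOf] at hn ⊢
          have : ((g * n * g⁻¹ : H) : G) = (g : G) * (n : G) * (g : G)⁻¹ := by push_cast; ring_nf
          rw [this]
          exact (Subgroup.mem_normalizer_iff.mp (hHB g.2) (n : G)).mp hn
        have hsup1 : A.subgroupOf H ⊔ M.subgroupOf H = ⊤ := by
          rw [eq_top_iff]
          rintro ⟨g, hg⟩ -
          have hg' : g ∈ A ⊔ M := hcover ▸ hg
          obtain ⟨a, ha, b, hb, hab⟩ := aux_mem_sup_decomp (le_trans hAH hHB) hg'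
          have : (⟨g, hg⟩ : H) = (⟨a, hAH ha⟩ : H) * (⟨b, hBH hb⟩ : H) :=
            Subtype.ext (by simp [hab])
          rw [this]
          exact mul_mem (Subgroup.mem_sup_left (Subgroup.mem_subgroupOf.mpr ha))
            (Subgroup.mem_sup_right (Subgroup.mem_subgroupOf.mpr hb))
        have hAnil : Group.IsNilpotent A := (IH _ hcc).2 fun i => hnil i.castSucc
        have hBnil : Group.IsNilpotent M := (IH _ hcs).2 fun i => hnil i.succ
        have hA1nil : Group.IsNilpotent (A.subgroupOf H) := by
          haveI := hAnil
          exact nilpotent_of_mulEquiv (Subgroup.subgroupOfEquivOfLe hAH).symm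
        have hB1nil : Group.IsNilpotent (M.subgroupOf H) := by
          haveI := hBnil
          exact nilpotent_of_mulEquiv (Subgroup.subgroupOfEquivOfLe hBH).symm
        exact aux_fitting hA1n hB1n hsup1 hA1nil hB1nil

end MainInduction

/-- If subgroups `U_1, …, U_k` of a group `G` satisfy
`[U_i, U_j] ≤ ⟨U_{i+1}, …, U_{j−1}⟩` for all `i < j`, then `⟨U_1, …, U_k⟩` equals the
product set `U_1 U_2 ⋯ U_k`; and if each `U_i` is nilpotent, this subgroup is nilpotent. -/
theorem subgroup_product_of_commutator_condition {G : Type*} [Group G] (k : ℕ)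
    (U : Fin k → Subgroup G)
    (hcomm : ∀ i j : Fin k, i < j → ⁅U i, U j⁆ ≤ ⨆ l ∈ Set.Ioo i j, U l) :
    (∀ g : G, g ∈ (⨆ i, U i) ↔
      ∃ u : Fin k → G, (∀ i, u i ∈ U i) ∧ g = (List.ofFn u).prod) ∧
    ((∀ i, Group.IsNilpotent (U i)) → Group.IsNilpotent (⨆ i, U i : Subgroup G)) :=
  aux_main k U hcomm
end
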